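/- arXiv:1803.02919 — 5 statements merged into one kernel-verified Lean document; each statement's English description precedes it below -/
import Mathlib

section
/- Let (Ω, F, μ) be a complete σ-finite measure space, let H be a separable real Hilbert space, let C be a closed convex subset of H with 0 ∈ C, let β > 0, and let φ : ℝ → ℝ be even, convex, and differentiable with a β-Lipschitzian derivative. Suppose that μ(Ω) < +∞ or φ(0) = 0, and define h on the Bochner space L²((Ω,F,μ); H) by h(x) = ∫_Ω φ(d_C(x(ω))) μ(dω). Then h is a well-defined real-valued, convex, Fréchet differentiable function with a β-Lipschitzian gradient, and for every x ∈ L²((Ω,F,μ); H) and μ-almost every ω ∈ Ω, (∇h(x))(ω) = (φ'(d_C(x(ω)))/d_C(x(ω))) (x(ω) − proj_C x(ω)) if x(ω) ∉ C, and (∇h(x))(ω) = 0 if x(ω) ∈ C. -/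
open MeasureTheory



lemma subgrad1D {k k' : ℝ → ℝ} (hk : ConvexOn ℝ Set.univ k)
    (hd : ∀ t, HasDerivAt k (k' t) t) (t s : ℝ) :
    k t + k' t * (s - t) ≤ k s := by
  rcases lt_trichotomy s t with hst | rfl | hst
  · have h1 := hk.slope_le_of_hasDerivAt (Set.mem_univ s) (Set.mem_univ t) hst (hd t)
    rw [slope_def_field, div_le_iff₀ (by linarith)] at h1
    nlinarith
  · simp
  · have h1 := hk.le_slope_of_hasDerivAt (Set.mem_univ t) (Set.mem_univ s) hst (hd t)
    rw [slope_def_field, le_div_iff₀ (by linarith)] at h1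
    nlinarith

section OneD
variable {β : ℝ} (hβ : 0 < β) {φ φ' : ℝ → ℝ}
  (heven : ∀ t, φ (-t) = φ t) (hconv : ConvexOn ℝ Set.univ φ)
  (hderiv : ∀ t, HasDerivAt φ (φ' t) t)
  (hlip : LipschitzWith (Real.toNNReal β) φ')

include hβ hlip in
lemma philip : ∀ s t : ℝ, |φ' s - φ' t| ≤ β * |s - t| := by
  intro s t
  have := hlip.dist_le_mul s t
  rwa [Real.dist_eq, Real.dist_eq, Real.coe_toNNReal β hβ.le] at this

include heven hconv in
lemma phi0_min : ∀ t, φ 0 ≤ φ t := by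
  intro t
  have h2 := hconv.2 (Set.mem_univ t) (Set.mem_univ (-t))
    (by norm_num : (0:ℝ) ≤ 1/2) (by norm_num : (0:ℝ) ≤ 1/2) (by norm_num)
  simp only [smul_eq_mul, heven t] at h2
  have : (1/2 : ℝ) * t + (1/2) * (-t) = 0 := by ring
  rw [this] at h2
  linarith

include heven hderiv in
lemma phi'_zero : φ' 0 = 0 := by
  have h1 : (fun t => φ (-t)) = φ := funext heven
  have h2 : HasDerivAt (fun t => φ (-t)) (-φ' (-0)) 0 := by
    simpa [Function.comp_def] using (hderiv (-0)).comp 0 (hasDerivAt_neg 0)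
  rw [h1] at h2
  have := h2.unique (hderiv 0)
  simp at this
  linarith

include heven hconv hderiv in
lemma phi'_nonneg : ∀ t, 0 ≤ t → 0 ≤ φ' t := by
  intro t ht
  rcases eq_or_lt_of_le ht with rfl | ht
  · exact le_of_eq (phi'_zero heven hderiv).symm
  · have h1 := subgrad1D hconv hderiv t 0
    have h2 := phi0_min heven hconv t
    nlinarith

include hβ heven hderiv hlip in
lemma phi'_le : ∀ t, 0 ≤ t → φ' t ≤ β * t := by
  intro t ht
  have h1 := philip hβ hlip t 0
  rw [phi'_zero heven hderiv] at h1
  simp only [sub_zero] at h1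
  rw [abs_of_nonneg ht] at h1
  exact le_trans (le_abs_self _) h1

include heven hconv in
lemma phi_mono : ∀ s t : ℝ, 0 ≤ s → s ≤ t → φ s ≤ φ t := by
  intro s t hs hst
  rcases eq_or_lt_of_le hst with rfl | hst
  · exact le_refl _
  · have ht : 0 < t := lt_of_le_of_lt hs hst
    have hl1 : 0 ≤ s / t := div_nonneg hs ht.le
    have hl2 : s / t ≤ 1 := by rw [div_le_one ht]; linarith
    have h2 := hconv.2 (Set.mem_univ (0:ℝ)) (Set.mem_univ t)
      (by linarith : (0:ℝ) ≤ 1 - s/t) hl1 (by ring)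
    simp only [smul_eq_mul, mul_zero, zero_add] at h2
    rw [div_mul_cancel₀ _ ht.ne'] at h2
    have h0 := phi0_min heven hconv t
    nlinarith

include hβ hderiv hlip in
lemma theta_convex : ConvexOn ℝ Set.univ (fun t => β/2 * t^2 - φ t) := by
  have hd : ∀ t, HasDerivAt (fun t => β/2 * t^2 - φ t) (β * t - φ' t) t := by
    intro t
    have : HasDerivAt (fun t : ℝ => β/2 * t^2) (β/2 * (2*t)) t := by
      simpa using (hasDerivAt_pow 2 t).const_mul (β/2)
    have h2 := this.sub (hderiv t); rw [show β/2 * (2*t) - φ' t = β * t - φ' t by ring] at h2; exact h2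
  have hdiff : Differentiable ℝ (fun t => β/2 * t^2 - φ t) := fun t => (hd t).differentiableAt
  have hD : deriv (fun t => β/2 * t^2 - φ t) = fun t => β * t - φ' t :=
    funext fun t => (hd t).deriv
  apply Monotone.convexOn_univ_of_deriv hdiff
  rw [hD]
  intro s t hst
  have := philip hβ hlip t s
  have := abs_le.mp ((philip hβ hlip t s))
  have h3 : φ' t - φ' s ≤ β * |t - s| := le_trans (le_abs_self _) (philip hβ hlip t s)
  rw [abs_of_nonneg (by linarith : (0:ℝ) ≤ t - s)] at h3
  simp only
  nlinarith

include hβ hderiv hlip in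
lemma descent1D : ∀ t s : ℝ, φ s ≤ φ t + φ' t * (s - t) + β/2 * (s-t)^2 := by
  intro t s
  have hθd : ∀ t, HasDerivAt (fun t : ℝ => β/2 * t^2 - φ t) (β * t - φ' t) t := by
    intro t
    have : HasDerivAt (fun t : ℝ => β/2 * t^2) (β/2 * (2*t)) t := by
      simpa using (hasDerivAt_pow 2 t).const_mul (β/2)
    have h2 := this.sub (hderiv t); rw [show β/2 * (2*t) - φ' t = β * t - φ' t by ring] at h2; exact h2
  have := subgrad1D (theta_convex hβ hderiv hlip) hθd t s
  nlinarith

end OneD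

noncomputable def Gr {H : Type*} [NormedAddCommGroup H] [InnerProductSpace ℝ H]
    (C : Set H) (φ' : ℝ → ℝ) (projC : H → H) (v : H) : H :=
  (φ' (Metric.infDist v C) / Metric.infDist v C) • (v - projC v)

section Hlevel
variable {H : Type*} [NormedAddCommGroup H] [InnerProductSpace ℝ H]
  {C : Set H} (hCconv : Convex ℝ C) (hC0 : (0:H) ∈ C)
  {projC : H → H} (hproj : ∀ x, projC x ∈ C ∧ ∀ y ∈ C, dist x (projC x) ≤ dist x y)

include hC0 hproj in
lemma proj_dist (v : H) : ‖v - projC v‖ = Metric.infDist v C := by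
  have h1 : Metric.infDist v C ≤ dist v (projC v) :=
    Metric.infDist_le_dist_of_mem (hproj v).1
  haveI : Nonempty C := ⟨⟨0, hC0⟩⟩
  have h2 : dist v (projC v) ≤ Metric.infDist v C := by
    rw [Metric.infDist_eq_iInf]
    exact le_ciInf fun w => (hproj v).2 w w.2
  rw [← dist_eq_norm]
  linarith

include hproj in
omit [InnerProductSpace ℝ H] in
lemma proj_self {v : H} (hv : v ∈ C) : projC v = v := by
  have := (hproj v).2 v hv
  simp only [dist_self] at this
  have : dist v (projC v) = 0 := le_antisymm this dist_nonneg
  exact (dist_eq_zero.mp this).symm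

include hCconv hC0 hproj in
lemma proj_inner (v : H) : ∀ w ∈ C, @inner ℝ _ _ (v - projC v) (w - projC v) ≤ 0 := by
  have hiInf : ‖v - projC v‖ = ⨅ w : C, ‖v - w‖ := by
    rw [proj_dist hC0 hproj, Metric.infDist_eq_iInf]
    simp [dist_eq_norm]
  exact (norm_eq_iInf_iff_real_inner_le_zero hCconv (hproj v).1).mp hiInf

end Hlevel

section Hmain
open RealInnerProductSpace
variable {H : Type*} [NormedAddCommGroup H] [InnerProductSpace ℝ H]
  {C : Set H} (hCclosed : IsClosed C) (hCconv : Convex ℝ C) (hC0 : (0:H) ∈ C)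
  {projC : H → H} (hproj : ∀ x, projC x ∈ C ∧ ∀ y ∈ C, dist x (projC x) ≤ dist x y)
  {β : ℝ} (hβ : 0 < β) {φ φ' : ℝ → ℝ}
  (heven : ∀ t, φ (-t) = φ t) (hconv : ConvexOn ℝ Set.univ φ)
  (hderiv : ∀ t, HasDerivAt φ (φ' t) t)
  (hlip : LipschitzWith (Real.toNNReal β) φ')

include hproj in
lemma Gr_zero {v : H} (hv : v ∈ C) : Gr C φ' projC v = 0 := by
  unfold Gr; rw [proj_self hproj hv]; simp

include hCclosed hC0 in
lemma d_pos {v : H} (hv : v ∉ C) : 0 < Metric.infDist v C :=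
  (hCclosed.notMem_iff_infDist_pos ⟨0, hC0⟩).mp hv

include hCclosed hCconv hC0 hproj heven hconv hderiv in
lemma subgradH (u v : H) :
    φ (Metric.infDist v C) + ⟪Gr C φ' projC v, u - v⟫ ≤ φ (Metric.infDist u C) := by
  set t := Metric.infDist v C with ht
  set s := Metric.infDist u C with hs
  have hs0 : 0 ≤ s := Metric.infDist_nonneg
  by_cases hv : v ∈ C
  · rw [Gr_zero hproj hv]
    simp only [inner_zero_left, add_zero]
    rw [ht, Metric.infDist_zero_of_mem hv]
    exact phi0_min heven hconv s
  · have htpos : 0 < t := d_pos hCclosed hC0 hv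
    set a := v - projC v with ha
    have hna : ‖a‖ = t := proj_dist hC0 hproj v
    -- key inner product bound
    have hkey : ⟪a, u - v⟫ ≤ t * s - t^2 := by
      have hsplit : u - v = (u - projC u) + (projC u - projC v) + (projC v - v) := by abel
      have h1 : ⟪a, u - projC u⟫ ≤ t * s := by
        calc ⟪a, u - projC u⟫ ≤ ‖a‖ * ‖u - projC u‖ := real_inner_le_norm _ _
        _ = t * s := by rw [hna, proj_dist hC0 hproj u]
      have h2 : ⟪a, projC u - projC v⟫ ≤ 0 :=
        proj_inner hCconv hC0 hproj v (projC u) (hproj u).1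
      have h3 : ⟪a, projC v - v⟫ = -t^2 := by
        have : projC v - v = -a := by rw [ha]; abel
        rw [this, inner_neg_right, real_inner_self_eq_norm_sq, hna]
      calc ⟪a, u - v⟫ = ⟪a, u - projC u⟫ + ⟪a, projC u - projC v⟫ + ⟪a, projC v - v⟫ := by
            rw [hsplit, inner_add_right, inner_add_right]
      _ ≤ t * s + 0 + (-t^2) := by rw [h3]; exact add_le_add (add_le_add h1 h2) le_rfl
      _ = t * s - t^2 := by ring
    have hφ't : 0 ≤ φ' t := phi'_nonneg heven hconv hderiv t htpos.le
    have hGinner : ⟪Gr C φ' projC v, u - v⟫ ≤ φ' t * (s - t) := by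
      unfold Gr
      rw [← ht, ← ha, real_inner_smul_left]
      have hq : 0 ≤ φ' t / t := div_nonneg hφ't htpos.le
      calc φ' t / t * ⟪a, u - v⟫ ≤ φ' t / t * (t * s - t^2) := by
            exact mul_le_mul_of_nonneg_left hkey hq
      _ = φ' t * (s - t) := by field_simp
    have := subgrad1D hconv hderiv t s
    linarith

include hCclosed hCconv hC0 hproj hβ heven hconv hderiv hlip in
lemma lemE (v w : H) (s : ℝ) (hs : 0 ≤ s) :
    φ (Metric.infDist (v + s • w) C) ≤
      φ (Metric.infDist v C) + s * ⟪Gr C φ' projC v, w⟫ + s^2 * β * ‖w‖^2 := by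
  have hd_nonneg : 0 ≤ Metric.infDist (v + s • w) C := Metric.infDist_nonneg
  by_cases hv : v ∈ C
  · rw [Gr_zero hproj hv]
    simp only [inner_zero_left, mul_zero, add_zero]
    have h1 : Metric.infDist (v + s • w) C ≤ s * ‖w‖ := by
      calc Metric.infDist (v + s • w) C ≤ dist (v + s • w) v := Metric.infDist_le_dist_of_mem hv
      _ = ‖s • w‖ := by rw [dist_eq_norm]; congr 1; abel
      _ = s * ‖w‖ := by rw [norm_smul, Real.norm_eq_abs, abs_of_nonneg hs]
    have h2 : φ (Metric.infDist (v + s • w) C) ≤ φ (s * ‖w‖) :=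
      phi_mono heven hconv _ _ hd_nonneg h1
    have h3 := descent1D hβ hderiv hlip 0 (s * ‖w‖)
    rw [phi'_zero heven hderiv] at h3
    rw [Metric.infDist_zero_of_mem hv]
    have hsw : (s * ‖w‖ - 0)^2 = s^2 * ‖w‖^2 := by ring
    nlinarith [sq_nonneg (s*‖w‖), sq_nonneg s, norm_nonneg w, sq_nonneg (s*‖w‖ - 0)]
  · set t := Metric.infDist v C with ht
    have htpos : 0 < t := d_pos hCclosed hC0 hv
    set a := v - projC v with ha
    have hna : ‖a‖ = t := proj_dist hC0 hproj v
    set r := ‖a + s • w‖ with hr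
    have hr_nonneg : 0 ≤ r := norm_nonneg _
    have hd_le : Metric.infDist (v + s • w) C ≤ r := by
      calc Metric.infDist (v + s • w) C ≤ dist (v + s • w) (projC v) :=
            Metric.infDist_le_dist_of_mem (hproj v).1
      _ = r := by rw [dist_eq_norm]; congr 1; rw [ha]; abel
    have h2 : φ (Metric.infDist (v + s • w) C) ≤ φ r :=
      phi_mono heven hconv _ _ hd_nonneg hd_le
    have hrsq : r^2 = t^2 + 2 * (s * ⟪a, w⟫) + s^2 * ‖w‖^2 := by
      rw [hr, norm_add_sq_real, hna, real_inner_smul_right, norm_smul,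
        Real.norm_eq_abs, abs_of_nonneg hs, mul_pow]
    have hrt : |r - t| ≤ s * ‖w‖ := by
      have := abs_norm_sub_norm_le (a + s • w) a
      simp only [add_sub_cancel_left] at this
      rw [hna] at this
      calc |r - t| ≤ ‖s • w‖ := this
      _ = s * ‖w‖ := by rw [norm_smul, Real.norm_eq_abs, abs_of_nonneg hs]
    have hrt2 : (r - t)^2 ≤ s^2 * ‖w‖^2 := by
      have := sq_abs (r - t) ▸ pow_le_pow_left₀ (abs_nonneg _) hrt 2
      calc (r - t)^2 = |r - t|^2 := (sq_abs _).symm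
      _ ≤ (s * ‖w‖)^2 := pow_le_pow_left₀ (abs_nonneg _) hrt 2
      _ = s^2 * ‖w‖^2 := by ring
    -- r - t ≤ (r^2 - t^2)/(2t)
    have hrdiff : r - t ≤ (r^2 - t^2) / (2*t) := by
      rw [le_div_iff₀ (by linarith)]
      nlinarith [sq_nonneg (r - t)]
    have hφ't : 0 ≤ φ' t := phi'_nonneg heven hconv hderiv t htpos.le
    have hφ'le : φ' t ≤ β * t := phi'_le hβ heven hderiv hlip t htpos.le
    have hfrt : φ' t * (r - t) ≤ s * (φ' t / t * ⟪a, w⟫) + s^2 * ‖w‖^2 * (β/2) := by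
      have h5 : φ' t * (r - t) ≤ φ' t * ((r^2 - t^2)/(2*t)) :=
        mul_le_mul_of_nonneg_left hrdiff hφ't
      have h6 : φ' t * ((r^2 - t^2)/(2*t)) = s * (φ' t / t * ⟪a, w⟫) + s^2*‖w‖^2 * (φ' t/(2*t)) := by
        rw [hrsq]; field_simp; ring
      have h7 : s^2*‖w‖^2 * (φ' t/(2*t)) ≤ s^2*‖w‖^2 * (β/2) := by
        apply mul_le_mul_of_nonneg_left _ (by positivity)
        rw [div_le_div_iff₀ (by linarith) (by norm_num)]
        nlinarith
      linarith
    have hdesc := descent1D hβ hderiv hlip t r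
    have hGw : ⟪Gr C φ' projC v, w⟫ = φ' t / t * ⟪a, w⟫ := by
      unfold Gr; rw [← ht, ← ha, real_inner_smul_left]
    rw [hGw]
    nlinarith [sq_nonneg s, norm_nonneg w]



include hCclosed hCconv hC0 hproj hβ heven hconv hderiv hlip in
lemma q_convex :
    ConvexOn ℝ Set.univ (fun v : H => β/2 * ‖v‖^2 - φ (Metric.infDist v C)) := by
  refine ⟨convex_univ, fun x _ y _ b c hb hc hbc => ?_⟩
  set z := b • x + c • y with hz
  set cc := projC z with hcc
  have hccC : cc ∈ C := (hproj z).1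
  set θ : ℝ → ℝ := fun t => β/2 * t^2 - φ t with hθ
  have hθeven : ∀ t, θ (-t) = θ t := by intro t; simp only [hθ, heven]; ring_nf
  have hθconv : ConvexOn ℝ Set.univ θ := theta_convex hβ hderiv hlip
  have hθmono := phi_mono hθeven hθconv
  -- F p = θ(‖p - cc‖) + β⟪p,cc⟫ - β/2‖cc‖²
  have hF : ∀ p : H, β/2 * ‖p‖^2 - φ (‖p - cc‖) =
      θ (‖p - cc‖) + β * ⟪p, cc⟫ - β/2 * ‖cc‖^2 := by
    intro p
    have := norm_sub_sq_real p cc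
    simp only [hθ]
    nlinarith [norm_sub_sq_real p cc]
  have hz_cc : ‖z - cc‖ = Metric.infDist z C := proj_dist hC0 hproj z
  have hdist_le : ∀ p : H, φ (Metric.infDist p C) ≤ φ (‖p - cc‖) := by
    intro p
    apply phi_mono heven hconv _ _ Metric.infDist_nonneg
    rw [← dist_eq_norm]
    exact Metric.infDist_le_dist_of_mem hccC
  have hnorm_le : ‖z - cc‖ ≤ b * ‖x - cc‖ + c * ‖y - cc‖ := by
    have : z - cc = b • (x - cc) + c • (y - cc) := by
      have h9 : b • (x - cc) + c • (y - cc) = b • x + c • y - (b + c) • cc := by module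
      rw [h9, hbc, one_smul, hz]
    rw [this]
    calc ‖b • (x - cc) + c • (y - cc)‖ ≤ ‖b • (x - cc)‖ + ‖c • (y - cc)‖ := norm_add_le _ _
    _ = b * ‖x - cc‖ + c * ‖y - cc‖ := by
        rw [norm_smul, norm_smul, Real.norm_eq_abs, Real.norm_eq_abs,
          abs_of_nonneg hb, abs_of_nonneg hc]
  have hθ1 : θ (‖z - cc‖) ≤ b * θ (‖x - cc‖) + c * θ (‖y - cc‖) := by
    calc θ (‖z - cc‖) ≤ θ (b * ‖x - cc‖ + c * ‖y - cc‖) :=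
          hθmono _ _ (norm_nonneg _) hnorm_le
    _ ≤ b * θ (‖x - cc‖) + c * θ (‖y - cc‖) := by
        have := hθconv.2 (Set.mem_univ (‖x - cc‖)) (Set.mem_univ (‖y - cc‖)) hb hc hbc
        simpa using this
  have hinner : ⟪z, cc⟫ = b * ⟪x, cc⟫ + c * ⟪y, cc⟫ := by
    rw [hz, inner_add_left, real_inner_smul_left, real_inner_smul_left]
  simp only [smul_eq_mul]
  have e1 : β/2 * ‖z‖^2 - φ (Metric.infDist z C) = θ (‖z - cc‖) + β * ⟪z, cc⟫ - β/2 * ‖cc‖^2 := by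
    rw [← hF z, hz_cc]
  have e2 : θ (‖x - cc‖) + β * ⟪x, cc⟫ - β/2 * ‖cc‖^2 = β/2 * ‖x‖^2 - φ (‖x - cc‖) := (hF x).symm
  have e3 : θ (‖y - cc‖) + β * ⟪y, cc⟫ - β/2 * ‖cc‖^2 = β/2 * ‖y‖^2 - φ (‖y - cc‖) := (hF y).symm
  have hx' := hdist_le x
  have hy' := hdist_le y
  clear_value z cc θ
  rw [e1]
  have hinner' : β * ⟪z, cc⟫ = b * (β * ⟪x, cc⟫) + c * (β * ⟪y, cc⟫) := by rw [hinner]; ring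
  have hcc2' : b * (β/2 * ‖cc‖^2) + c * (β/2 * ‖cc‖^2) = β/2 * ‖cc‖^2 := by
    rw [← add_mul, hbc, one_mul]
  have e2' : b * (θ ‖x - cc‖ + β * ⟪x, cc⟫ - β/2 * ‖cc‖^2) = b * (β/2 * ‖x‖^2 - φ ‖x - cc‖) := by
    rw [e2]
  have e3' : c * (θ ‖y - cc‖ + β * ⟪y, cc⟫ - β/2 * ‖cc‖^2) = c * (β/2 * ‖y‖^2 - φ ‖y - cc‖) := by
    rw [e3]
  have hx'' : b * φ (Metric.infDist x C) ≤ b * φ ‖x - cc‖ := mul_le_mul_of_nonneg_left hx' hb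
  have hy'' : c * φ (Metric.infDist y C) ≤ c * φ ‖y - cc‖ := mul_le_mul_of_nonneg_left hy' hc
  have goal1 : θ ‖z - cc‖ + β * ⟪z, cc⟫ - β/2 * ‖cc‖^2 ≤
      b * (θ ‖x - cc‖ + β * ⟪x, cc⟫ - β/2 * ‖cc‖^2)
      + c * (θ ‖y - cc‖ + β * ⟪y, cc⟫ - β/2 * ‖cc‖^2) := by
    have expand : b * (θ ‖x - cc‖ + β * ⟪x, cc⟫ - β/2 * ‖cc‖^2)
        + c * (θ ‖y - cc‖ + β * ⟪y, cc⟫ - β/2 * ‖cc‖^2)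
        = (b * θ ‖x - cc‖ + c * θ ‖y - cc‖)
          + (b * (β * ⟪x, cc⟫) + c * (β * ⟪y, cc⟫))
          - (b * (β/2 * ‖cc‖^2) + c * (β/2 * ‖cc‖^2)) := by ring
    rw [expand, hcc2', ← hinner']
    linarith [hθ1]
  rw [e2', e3'] at goal1
  linarith [goal1, hx'', hy'']

include hCclosed hCconv hC0 hproj hβ heven hconv hderiv hlip in
lemma descentH (u v : H) :
    φ (Metric.infDist u C) ≤ φ (Metric.infDist v C) + ⟪Gr C φ' projC v, u - v⟫
      + β/2 * ‖u - v‖^2 := by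
  have key : ∀ s : ℝ, 0 < s → s ≤ 1 →
      φ (Metric.infDist u C) - φ (Metric.infDist v C) - ⟪Gr C φ' projC v, u - v⟫
        - β/2 * ‖u - v‖^2 ≤ s * (β/2 * ‖u - v‖^2) := by
    intro s hs hs1
    have hq := (q_convex hCclosed hCconv hC0 hproj hβ heven hconv hderiv hlip).2
      (Set.mem_univ v) (Set.mem_univ u) (by linarith : (0:ℝ) ≤ 1 - s) hs.le (by ring)
    simp only [smul_eq_mul] at hq
    have hvw : (1-s) • v + s • u = v + s • (u - v) := by module
    rw [hvw] at hq
    have hle := lemE hCclosed hCconv hC0 hproj hβ heven hconv hderiv hlip v (u - v) s hs.le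
    have hnv : ‖v + s • (u - v)‖^2 = ‖v‖^2 + 2 * (s * ⟪v, u - v⟫) + s^2 * ‖u - v‖^2 := by
      rw [norm_add_sq_real, real_inner_smul_right, norm_smul, Real.norm_eq_abs,
        abs_of_nonneg hs.le, mul_pow]
    have hnu : ‖u‖^2 = ‖v‖^2 + 2 * ⟪v, u - v⟫ + ‖u - v‖^2 := by
      have h9 : u = v + (u - v) := by abel
      conv_lhs => rw [h9]
      rw [norm_add_sq_real]
    have hmul : s * (φ (Metric.infDist u C) - φ (Metric.infDist v C)
        - ⟪Gr C φ' projC v, u - v⟫ - β/2 * ‖u - v‖^2)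
        ≤ s * (s * (β/2 * ‖u - v‖^2)) := by
      have hnv' : β/2 * ‖v + s • (u - v)‖^2
          = β/2 * ‖v‖^2 + β * (s * ⟪v, u - v⟫) + s^2 * (β/2 * ‖u - v‖^2) := by
        rw [hnv]; ring
      have hnu' : s * (β/2 * ‖u‖^2)
          = s * (β/2 * ‖v‖^2) + s * (β * ⟪v, u - v⟫) + s * (β/2 * ‖u - v‖^2) := by
        rw [hnu]; ring
      nlinarith [hq, hle, hnv', hnu']
    exact le_of_mul_le_mul_left hmul hs
  by_contra hcon
  push_neg at hcon
  set E : ℝ := φ (Metric.infDist u C) - φ (Metric.infDist v C) - ⟪Gr C φ' projC v, u - v⟫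
    - β/2 * ‖u - v‖^2 with hE
  set K : ℝ := β/2 * ‖u - v‖^2 with hK
  have hK0 : 0 ≤ K := by positivity
  have hEpos : 0 < E := by rw [hE]; linarith
  set s0 : ℝ := min 1 (E / (2*K + 1)) with hs0
  have hs0pos : 0 < s0 := lt_min one_pos (div_pos hEpos (by linarith))
  have hs0le : s0 ≤ 1 := min_le_left _ _
  have h1 : E ≤ s0 * K := key s0 hs0pos hs0le
  have hs0le2 : s0 ≤ E / (2*K + 1) := min_le_right _ _
  have h2 : s0 * K ≤ E / (2*K + 1) * K := mul_le_mul_of_nonneg_right hs0le2 hK0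
  have h3 : E / (2*K+1) * K < E := by
    rw [div_mul_eq_mul_div, div_lt_iff₀ (by linarith)]
    nlinarith
  clear_value E K s0
  linarith

include hCclosed hCconv hC0 hproj hβ heven hconv hderiv hlip in
lemma coco (u v : H) :
    φ (Metric.infDist v C) - φ (Metric.infDist u C) + ⟪Gr C φ' projC v, u - v⟫
      + 1/(2*β) * ‖Gr C φ' projC u - Gr C φ' projC v‖^2 ≤ 0 := by
  set Gu := Gr C φ' projC u with hGu
  set Gv := Gr C φ' projC v with hGv
  set D := Gu - Gv with hD
  set z := u - (1/β) • D with hz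
  have h1 := descentH hCclosed hCconv hC0 hproj hβ heven hconv hderiv hlip z u
  have h2 := subgradH hCclosed hCconv hC0 hproj heven hconv hderiv z v
  have hzu : z - u = -((1/β) • D) := by rw [hz]; abel
  have hzv : z - v = (u - v) - (1/β) • D := by rw [hz]; abel
  have e1 : ⟪Gu, z - u⟫ = -(1/β * ⟪Gu, D⟫) := by
    rw [hzu, inner_neg_right, real_inner_smul_right]
  have e2 : ‖z - u‖^2 = (1/β)^2 * ‖D‖^2 := by
    rw [hzu, norm_neg, norm_smul, Real.norm_eq_abs, abs_of_nonneg (by positivity : (0:ℝ) ≤ 1/β),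
      mul_pow]
  have e3 : ⟪Gv, z - v⟫ = ⟪Gv, u - v⟫ - 1/β * ⟪Gv, D⟫ := by
    rw [hzv, inner_sub_right, real_inner_smul_right]
  have e4 : ⟪Gu, D⟫ - ⟪Gv, D⟫ = ‖D‖^2 := by
    rw [← inner_sub_left, ← hD, real_inner_self_eq_norm_sq]
  rw [e1, e2] at h1
  rw [e3] at h2
  have hβ2 : β/2 * ((1/β)^2 * ‖D‖^2) = 1/(2*β) * ‖D‖^2 := by
    field_simp
  have hβ3 : (1/β) * ‖D‖^2 - 1/(2*β) * ‖D‖^2 = 1/(2*β) * ‖D‖^2 := by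
    field_simp; ring
  have e4' : 1/β * ⟪Gu, D⟫ - 1/β * ⟪Gv, D⟫ = 1/β * ‖D‖^2 := by rw [← mul_sub, e4]
  linarith [h1, h2, hβ2, hβ3, e4']

include hCclosed hCconv hC0 hproj hβ heven hconv hderiv hlip in
lemma Gr_lip (u v : H) :
    ‖Gr C φ' projC u - Gr C φ' projC v‖ ≤ β * ‖u - v‖ := by
  have h1 := coco hCclosed hCconv hC0 hproj hβ heven hconv hderiv hlip u v
  have h2 := coco hCclosed hCconv hC0 hproj hβ heven hconv hderiv hlip v u
  set Gu := Gr C φ' projC u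
  set Gv := Gr C φ' projC v
  have hsymm : ‖Gv - Gu‖ = ‖Gu - Gv‖ := by rw [norm_sub_rev]
  rw [hsymm] at h2
  have hvu : (v - u) = -(u - v) := by abel
  have hinner : ⟪Gu, v - u⟫ = -⟪Gu, u - v⟫ := by rw [hvu, inner_neg_right]
  rw [hinner] at h2
  -- add: ⟪Gv - Gu, u - v⟫ + 1/β ‖D‖² ≤ 0
  have hadd : 1/β * ‖Gu - Gv‖^2 ≤ ⟪Gu - Gv, u - v⟫ := by
    have h5 := inner_sub_left (𝕜 := ℝ) Gu Gv (u - v)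
    have h6 : 1/β * ‖Gu - Gv‖^2 = 2 * (1/(2*β) * ‖Gu - Gv‖^2) := by
      field_simp
    linarith [h1, h2, h5, h6]
  have hcs : ⟪Gu - Gv, u - v⟫ ≤ ‖Gu - Gv‖ * ‖u - v‖ := real_inner_le_norm _ _
  by_cases hzero : ‖Gu - Gv‖ = 0
  · rw [hzero]; positivity
  · have hpos : 0 < ‖Gu - Gv‖ := lt_of_le_of_ne (norm_nonneg _) (Ne.symm hzero)
    have : 1/β * ‖Gu - Gv‖^2 ≤ ‖Gu - Gv‖ * ‖u - v‖ := le_trans hadd hcs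
    rw [div_mul_eq_mul_div, div_le_iff₀ hβ] at this
    nlinarith

include hCconv hC0 hproj heven hconv in
lemma F_convex_pt (x y : H) (b c : ℝ) (hb : 0 ≤ b) (hc : 0 ≤ c) (hbc : b + c = 1) :
    φ (Metric.infDist (b • x + c • y) C) ≤
      b * φ (Metric.infDist x C) + c * φ (Metric.infDist y C) := by
  set u0 := projC x with hu0
  set v0 := projC y with hv0
  have hmem : b • u0 + c • v0 ∈ C := hCconv (hproj x).1 (hproj y).1 hb hc hbc
  have hd : Metric.infDist (b • x + c • y) C ≤
      b * Metric.infDist x C + c * Metric.infDist y C := by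
    calc Metric.infDist (b • x + c • y) C ≤ dist (b • x + c • y) (b • u0 + c • v0) :=
          Metric.infDist_le_dist_of_mem hmem
    _ = ‖b • (x - u0) + c • (y - v0)‖ := by rw [dist_eq_norm]; congr 1; rw [smul_sub, smul_sub]; abel
    _ ≤ ‖b • (x - u0)‖ + ‖c • (y - v0)‖ := norm_add_le _ _
    _ = b * ‖x - u0‖ + c * ‖y - v0‖ := by
        rw [norm_smul, norm_smul, Real.norm_eq_abs, Real.norm_eq_abs,
          abs_of_nonneg hb, abs_of_nonneg hc]
    _ = b * Metric.infDist x C + c * Metric.infDist y C := by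
        rw [hu0, hv0, proj_dist hC0 hproj, proj_dist hC0 hproj]
  calc φ (Metric.infDist (b • x + c • y) C) ≤
        φ (b * Metric.infDist x C + c * Metric.infDist y C) :=
      phi_mono heven hconv _ _ Metric.infDist_nonneg hd
  _ ≤ b * φ (Metric.infDist x C) + c * φ (Metric.infDist y C) := by
      have := hconv.2 (Set.mem_univ (Metric.infDist x C)) (Set.mem_univ (Metric.infDist y C))
        hb hc hbc
      simpa using this

include hC0 hβ heven hconv hderiv hlip in
lemma F_bound (v : H) :
    φ 0 ≤ φ (Metric.infDist v C) ∧ φ (Metric.infDist v C) ≤ φ 0 + β * ‖v‖^2 := by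
  set t := Metric.infDist v C with ht
  have ht0 : 0 ≤ t := Metric.infDist_nonneg
  have htn : t ≤ ‖v‖ := by
    have := Metric.infDist_le_dist_of_mem hC0 (x := v)
    rwa [dist_zero_right] at this
  constructor
  · exact phi0_min heven hconv t
  · have h1 := subgrad1D hconv hderiv t 0
    have h2 := phi'_le hβ heven hderiv hlip t ht0
    have h3 := phi'_nonneg heven hconv hderiv t ht0
    have h4 : t^2 ≤ ‖v‖^2 := pow_le_pow_left₀ ht0 htn 2
    nlinarith [h1, h2, h3, h4, mul_le_mul_of_nonneg_right h2 ht0,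
      mul_le_mul_of_nonneg_left h4 hβ.le]

include hβ hCclosed hCconv hC0 hproj heven hconv hderiv hlip in
lemma Gr_norm_le (v : H) : ‖Gr C φ' projC v‖ ≤ β * ‖v‖ := by
  have h0 : Gr C φ' projC 0 = 0 := Gr_zero hproj hC0
  have := Gr_lip hCclosed hCconv hC0 hproj hβ heven hconv hderiv hlip v 0
  rw [h0, sub_zero, sub_zero] at this
  exact this

end Hmain


open RealInnerProductSpace in
/-- Let `(Ω, F, μ)` be a complete σ-finite measure space, `H` a
separable real Hilbert space, `C` a closed convex subset of `H` with `0 ∈ C`, `β > 0`,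
and `φ : ℝ → ℝ` even convex differentiable with a `β`-Lipschitzian derivative.  Assume
`μ(Ω) < ∞` or `φ(0) = 0`, and set `h x = ∫ φ(d_C(x ω)) dμ(ω)` on `L²(Ω; H)`.  Then `h`
is well defined, real valued, convex, Fréchet differentiable with a `β`-Lipschitzian
gradient, and for `μ`-a.e. `ω`, `(∇h(x))(ω) = (φ'(d_C(x ω))/d_C(x ω))(x ω − proj_C(x ω))`
if `x ω ∉ C` and `(∇h(x))(ω) = 0` if `x ω ∈ C`. -/
theorem stmt_13 {Ω : Type*} [MeasurableSpace Ω] (μ : Measure Ω)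
    [μ.IsComplete] [SigmaFinite μ]
    {H : Type*} [NormedAddCommGroup H] [InnerProductSpace ℝ H] [CompleteSpace H]
    [SecondCountableTopology H]
    (C : Set H) (hCclosed : IsClosed C) (hCconv : Convex ℝ C) (hC0 : (0 : H) ∈ C)
    (β : ℝ) (hβ : 0 < β)
    (φ : ℝ → ℝ) (heven : ∀ t, φ (-t) = φ t) (hconv : ConvexOn ℝ Set.univ φ)
    (φ' : ℝ → ℝ) (hderiv : ∀ t, HasDerivAt φ (φ' t) t)
    (hlip : LipschitzWith (Real.toNNReal β) φ')
    (hfin : μ Set.univ < ⊤ ∨ φ 0 = 0)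
    (projC : H → H)
    (hproj : ∀ x, projC x ∈ C ∧ ∀ y ∈ C, dist x (projC x) ≤ dist x y)
    (h : Lp H 2 μ → ℝ)
    (hdef : ∀ x : Lp H 2 μ, h x = ∫ ω, φ (Metric.infDist (x ω) C) ∂μ) :
    (∀ x : Lp H 2 μ, Integrable (fun ω => φ (Metric.infDist (x ω) C)) μ) ∧
    ConvexOn ℝ Set.univ h ∧
    ∃ g : Lp H 2 μ → Lp H 2 μ,
      (∀ x, HasGradientAt h (g x) x) ∧
      LipschitzWith (Real.toNNReal β) g ∧
      (∀ x : Lp H 2 μ, ∀ᵐ ω ∂μ,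
        (x ω ∉ C → g x ω =
          (φ' (Metric.infDist (x ω) C) / Metric.infDist (x ω) C) • (x ω - projC (x ω))) ∧
        (x ω ∈ C → g x ω = 0)) := by

  have hφcont : Continuous φ := continuous_iff_continuousAt.mpr fun t => (hderiv t).continuousAt
  have hFcont : Continuous (fun v : H => φ (Metric.infDist v C)) :=
    hφcont.comp (Metric.continuous_infDist_pt C)
  have hGlipW : LipschitzWith (Real.toNNReal β) (Gr C φ' projC) := by
    apply LipschitzWith.of_dist_le_mul
    intro u v
    rw [dist_eq_norm, dist_eq_norm, Real.coe_toNNReal _ hβ.le]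
    exact Gr_lip hCclosed hCconv hC0 hproj hβ heven hconv hderiv hlip u v
  -- Integrability
  have hint : ∀ x : Lp H 2 μ, Integrable (fun ω => φ (Metric.infDist (x ω) C)) μ := by
    intro x
    have hmeas : AEStronglyMeasurable (fun ω => φ (Metric.infDist (x ω) C)) μ :=
      hFcont.comp_aestronglyMeasurable (Lp.aestronglyMeasurable x)
    have hnormsq : Integrable (fun ω => ‖x ω‖^2) μ := (Lp.memLp x).norm.integrable_sq
    rcases hfin with hμ | hφ0
    · haveI : IsFiniteMeasure μ := ⟨hμ⟩
      apply Integrable.mono' ((integrable_const (|φ 0|)).add (hnormsq.const_mul β)) hmeas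
      filter_upwards with ω
      have hb := F_bound hC0 hβ heven hconv hderiv hlip (x ω)
      have hβn : 0 ≤ β * ‖x ω‖^2 := by positivity
      simp only [Pi.add_apply]
      rw [Real.norm_eq_abs, abs_le]
      constructor
      · have := neg_abs_le (φ 0); linarith [hb.1]
      · have := le_abs_self (φ 0); linarith [hb.2]
    · apply Integrable.mono' (hnormsq.const_mul β) hmeas
      filter_upwards with ω
      have hb := F_bound hC0 hβ heven hconv hderiv hlip (x ω)
      rw [hφ0] at hb
      rw [Real.norm_eq_abs, abs_le]
      constructor
      · have hβn : 0 ≤ β * ‖x ω‖^2 := by positivity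
        linarith [hb.1]
      · linarith [hb.2]
  -- Convexity
  have hconvh : ConvexOn ℝ Set.univ h := by
    refine ⟨convex_univ, fun x _ y _ b c hb hc hbc => ?_⟩
    rw [hdef, hdef, hdef]
    have hcoe : (fun ω => φ (Metric.infDist ((b • x + c • y : Lp H 2 μ) ω) C)) =ᵐ[μ]
        fun ω => φ (Metric.infDist (b • (x ω) + c • (y ω)) C) := by
      filter_upwards [Lp.coeFn_add (b • x) (c • y), Lp.coeFn_smul b x, Lp.coeFn_smul c y]
        with ω h1 h2 h3
      rw [h1, Pi.add_apply, h2, h3, Pi.smul_apply, Pi.smul_apply]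
    rw [integral_congr_ae hcoe]
    have hint2 : Integrable (fun ω => φ (Metric.infDist (b • (x ω) + c • (y ω)) C)) μ :=
      (hint (b • x + c • y)).congr hcoe
    calc ∫ ω, φ (Metric.infDist (b • (x ω) + c • (y ω)) C) ∂μ
        ≤ ∫ ω, (b * φ (Metric.infDist (x ω) C) + c * φ (Metric.infDist (y ω) C)) ∂μ := by
          apply integral_mono_ae hint2 (((hint x).const_mul b).add ((hint y).const_mul c))
          filter_upwards with ω
          exact F_convex_pt hCconv hC0 hproj heven hconv (x ω) (y ω) b c hb hc hbc
      _ = b * ∫ ω, φ (Metric.infDist (x ω) C) ∂μ + c * ∫ ω, φ (Metric.infDist (y ω) C) ∂μ := by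
          rw [integral_add ((hint x).const_mul b) ((hint y).const_mul c),
            integral_const_mul, integral_const_mul]
      _ = b • (∫ ω, φ (Metric.infDist (x ω) C) ∂μ) + c • (∫ ω, φ (Metric.infDist (y ω) C) ∂μ) := by
          simp [smul_eq_mul]
  -- the gradient map
  have hGmem : ∀ x : Lp H 2 μ, MemLp (fun ω => Gr C φ' projC (x ω)) 2 μ := by
    intro x
    have hmeas : AEStronglyMeasurable (fun ω => Gr C φ' projC (x ω)) μ :=
      hGlipW.continuous.comp_aestronglyMeasurable (Lp.aestronglyMeasurable x)
    refine MemLp.of_le ((Lp.memLp x).norm.const_mul β) hmeas ?_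
    filter_upwards with ω
    have := Gr_norm_le hCclosed hCconv hC0 hproj hβ heven hconv hderiv hlip (x ω)
    rw [Real.norm_eq_abs, abs_of_nonneg (by positivity : 0 ≤ β * ‖x ω‖)]
    exact this
  refine ⟨hint, hconvh, fun x => (hGmem x).toLp _, ?_, ?_, ?_⟩
  · -- HasGradientAt
    intro x
    set g : Lp H 2 μ := (hGmem x).toLp _ with hg
    have hgcoe : g =ᵐ[μ] fun ω => Gr C φ' projC (x ω) := (hGmem x).coeFn_toLp
    have key1 : ∀ y : Lp H 2 μ, h x + ⟪g, y - x⟫ ≤ h y := by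
      intro y
      have intB : Integrable (fun ω => ⟪(g : Ω → H) ω, ((y - x : Lp H 2 μ) : Ω → H) ω⟫) μ :=
        L2.integrable_inner (𝕜 := ℝ) g (y - x)
      rw [hdef, hdef, L2.inner_def]
      rw [← integral_add (hint x) intB]
      apply integral_mono_ae ((hint x).add intB) (hint y)
      filter_upwards [hgcoe, Lp.coeFn_sub y x] with ω h1 h2
      simp only [Pi.add_apply]
      rw [h1, h2, Pi.sub_apply]
      exact subgradH hCclosed hCconv hC0 hproj heven hconv hderiv (y ω) (x ω)
    have hnormint : ∀ y : Lp H 2 μ, ‖y - x‖^2 = ∫ ω, ‖((y - x : Lp H 2 μ) : Ω → H) ω‖^2 ∂μ := by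
      intro y
      have h0 := L2.inner_def (𝕜 := ℝ) (y - x) (y - x)
      rw [real_inner_self_eq_norm_sq] at h0
      rw [h0]
      apply integral_congr_ae
      filter_upwards with ω
      rw [real_inner_self_eq_norm_sq]
    have key2 : ∀ y : Lp H 2 μ, h y ≤ h x + ⟪g, y - x⟫ + β/2 * ‖y - x‖^2 := by
      intro y
      have intB : Integrable (fun ω => ⟪(g : Ω → H) ω, ((y - x : Lp H 2 μ) : Ω → H) ω⟫) μ :=
        L2.integrable_inner (𝕜 := ℝ) g (y - x)
      have intC : Integrable (fun ω => β/2 * ‖((y - x : Lp H 2 μ) : Ω → H) ω‖^2) μ :=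
        ((Lp.memLp (y - x)).norm.integrable_sq).const_mul (β/2)
      have intAB : Integrable
          (fun ω => φ (Metric.infDist (x ω) C) + ⟪(g : Ω → H) ω, ((y - x : Lp H 2 μ) : Ω → H) ω⟫) μ :=
        (hint x).add intB
      rw [hdef, hdef, L2.inner_def, hnormint y, ← integral_const_mul,
        ← integral_add (hint x) intB, ← integral_add intAB intC]
      apply integral_mono_ae (hint y) (intAB.add intC)
      filter_upwards [hgcoe, Lp.coeFn_sub y x] with ω h1 h2
      simp only [Pi.add_apply]
      rw [h1, h2, Pi.sub_apply]
      exact descentH hCclosed hCconv hC0 hproj hβ heven hconv hderiv hlip (y ω) (x ω)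
    rw [hasGradientAt_iff_isLittleO, Asymptotics.isLittleO_iff]
    intro ε hε
    rw [Metric.eventually_nhds_iff]
    refine ⟨2 * ε / β, by positivity, fun y hy => ?_⟩
    rw [dist_eq_norm] at hy
    have h1 := key1 y
    have h2 := key2 y
    have herr : ‖h y - h x - ⟪g, y - x⟫‖ ≤ β/2 * ‖y - x‖^2 := by
      rw [Real.norm_eq_abs, abs_le]
      constructor
      · have : 0 ≤ β/2 * ‖y - x‖^2 := by positivity
        linarith
      · linarith
    calc ‖h y - h x - ⟪g, y - x⟫‖ ≤ β/2 * ‖y - x‖^2 := herr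
      _ ≤ ε * ‖y - x‖ := by
          have hn : 0 ≤ ‖y - x‖ := norm_nonneg _
          have h9 : ‖y - x‖ * β < 2 * ε := by
            rw [← lt_div_iff₀ hβ]; exact hy
          nlinarith [mul_le_mul_of_nonneg_left h9.le hn]
  · -- Lipschitz
    apply LipschitzWith.of_dist_le_mul
    intro x y
    rw [dist_eq_norm, dist_eq_norm, Real.coe_toNNReal _ hβ.le]
    set gx : Lp H 2 μ := (hGmem x).toLp _
    set gy : Lp H 2 μ := (hGmem y).toLp _
    have hnormint : ‖gx - gy‖^2 = ∫ ω, ‖(gx - gy) ω‖^2 ∂μ := by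
      have h0 := L2.inner_def (𝕜 := ℝ) (gx - gy) (gx - gy)
      rw [real_inner_self_eq_norm_sq] at h0
      rw [h0]
      apply integral_congr_ae
      filter_upwards with ω
      rw [real_inner_self_eq_norm_sq]
    have hnormint2 : ‖x - y‖^2 = ∫ ω, ‖(x - y) ω‖^2 ∂μ := by
      have h0 := L2.inner_def (𝕜 := ℝ) (x - y) (x - y)
      rw [real_inner_self_eq_norm_sq] at h0
      rw [h0]
      apply integral_congr_ae
      filter_upwards with ω
      rw [real_inner_self_eq_norm_sq]
    have hsq : ‖gx - gy‖^2 ≤ β^2 * ‖x - y‖^2 := by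
      rw [hnormint, hnormint2, ← integral_const_mul]
      apply integral_mono_ae ((Lp.memLp (gx - gy)).norm.integrable_sq)
        (((Lp.memLp (x - y)).norm.integrable_sq).const_mul (β^2))
      filter_upwards [(hGmem x).coeFn_toLp, (hGmem y).coeFn_toLp, Lp.coeFn_sub gx gy,
        Lp.coeFn_sub x y] with ω h1 h2 h3 h4
      rw [h3, Pi.sub_apply, h1, h2, h4, Pi.sub_apply]
      have := Gr_lip hCclosed hCconv hC0 hproj hβ heven hconv hderiv hlip (x ω) (y ω)
      nlinarith [norm_nonneg (Gr C φ' projC (x ω) - Gr C φ' projC (y ω)),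
        norm_nonneg ((x ω) - (y ω)), hβ.le]
    have hsq' : ‖gx - gy‖^2 ≤ (β * ‖x - y‖)^2 := by nlinarith [hsq]
    exact (pow_le_pow_iff_left₀ (norm_nonneg _) (by positivity) (by norm_num)).mp hsq'
  · -- a.e. formula
    intro x
    filter_upwards [(hGmem x).coeFn_toLp] with ω hω
    constructor
    · intro _
      rw [hω]
      rfl
    · intro hmem
      rw [hω]
      exact Gr_zero hproj hmem
end

section
/- Let (Ω, F, μ) be a complete σ-finite measure space, let H be a separable real Hilbert space, let C be a closed convex subset of H with 0 ∈ C, let β > 0, and let φ : ℝ → ℝ be even, convex, and differentiable with a β-Lipschitzian derivative. Suppose that μ(Ω) < +∞ or φ(0) = 0, and define h on the Bochner space L²((Ω,F,μ); H) by h(x) = ∫_Ω φ(d_C(x(ω))) μ(dω). Let γ > 0 and x ∈ L²((Ω,F,μ); H). Then for μ-almost every ω ∈ Ω, (prox_{γh} x)(ω) = proj_C x(ω) + (prox_{γφ} d_C(x(ω)) / d_C(x(ω))) (x(ω) − proj_C x(ω)) if x(ω) ∉ C, and (prox_{γh} x)(ω) = x(ω) if x(ω) ∈ C. -/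
open MeasureTheory Metric

section aux
variable {H : Type*} [NormedAddCommGroup H] [InnerProductSpace ℝ H]

lemma aux_proj_inner {C : Set H} (hCconv : Convex ℝ C) (projC : H → H)
    (hproj : ∀ x, projC x ∈ C ∧ ∀ y ∈ C, dist x (projC x) ≤ dist x y)
    (v : H) {c : H} (hc : c ∈ C) : inner ℝ (v - projC v) (c - projC v) ≤ (0:ℝ) := by
  have hne : Nonempty C := ⟨⟨c, hc⟩⟩
  have h1 : ‖v - projC v‖ = ⨅ w : C, ‖v - w‖ := by
    apply le_antisymm
    · refine le_ciInf fun w => ?_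
      simpa [dist_eq_norm] using (hproj v).2 w w.2
    · exact ciInf_le_of_le ⟨0, fun _ ⟨w, hw⟩ => hw ▸ norm_nonneg _⟩
        ⟨projC v, (hproj v).1⟩ le_rfl
  exact (norm_eq_iInf_iff_real_inner_le_zero hCconv (hproj v).1).1 h1 c hc

lemma aux_proj_lip {C : Set H} (hCconv : Convex ℝ C) (projC : H → H)
    (hproj : ∀ x, projC x ∈ C ∧ ∀ y ∈ C, dist x (projC x) ≤ dist x y)
    (a b : H) : ‖projC a - projC b‖ ≤ ‖a - b‖ := by
  have h1 := aux_proj_inner hCconv projC hproj a (hproj b).1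
  have h2 := aux_proj_inner hCconv projC hproj b (hproj a).1
  have key : ‖projC a - projC b‖ ^ 2 ≤ inner ℝ (a - b) (projC a - projC b) := by
    have e1 : (inner ℝ (a - b) (projC a - projC b) : ℝ)
        - inner ℝ (projC a - projC b) (projC a - projC b)
        = (0 - (inner ℝ (a - projC a) (projC b - projC a) : ℝ))
          + (0 - (inner ℝ (b - projC b) (projC a - projC b) : ℝ)) := by
      simp only [inner_sub_left, inner_sub_right]
      have c1 := real_inner_comm a (projC b)
      have c2 := real_inner_comm b (projC a)
      have c3 := real_inner_comm (projC a) (projC b)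
      have c4 := real_inner_comm a b
      have c5 := real_inner_comm a (projC a)
      have c6 := real_inner_comm b (projC b)
      linarith
    have e2 : (inner ℝ (projC a - projC b) (projC a - projC b) : ℝ)
        = ‖projC a - projC b‖ ^ 2 := real_inner_self_eq_norm_sq _
    linarith
  have h3 : (inner ℝ (a - b) (projC a - projC b) : ℝ) ≤ ‖a - b‖ * ‖projC a - projC b‖ :=
    real_inner_le_norm _ _
  nlinarith [norm_nonneg (projC a - projC b), norm_nonneg (a - b)]

end aux

set_option maxHeartbeats 1000000 in
/-- In the setting of Statement 13 (`h x = ∫ φ(d_C(x ω)) dμ(ω)` on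
`L²(Ω; H)`), for `γ > 0` and `x ∈ L²(Ω; H)`, the proximal point `p = prox_{γh} x`
satisfies, for `μ`-a.e. `ω`:
`p ω = proj_C (x ω) + (prox_{γφ}(d_C(x ω))/d_C(x ω)) (x ω − proj_C(x ω))` if `x ω ∉ C`,
and `p ω = x ω` if `x ω ∈ C`. -/
theorem stmt_14 {Ω : Type*} [MeasurableSpace Ω] (μ : Measure Ω)
    [μ.IsComplete] [SigmaFinite μ]
    {H : Type*} [NormedAddCommGroup H] [InnerProductSpace ℝ H] [CompleteSpace H]
    [SecondCountableTopology H]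
    (C : Set H) (hCclosed : IsClosed C) (hCconv : Convex ℝ C) (hC0 : (0 : H) ∈ C)
    (β : ℝ) (hβ : 0 < β)
    (φ : ℝ → ℝ) (heven : ∀ t, φ (-t) = φ t) (hconv : ConvexOn ℝ Set.univ φ)
    (φ' : ℝ → ℝ) (hderiv : ∀ t, HasDerivAt φ (φ' t) t)
    (hlip : LipschitzWith (Real.toNNReal β) φ')
    (hfin : μ Set.univ < ⊤ ∨ φ 0 = 0)
    (projC : H → H)
    (hproj : ∀ x, projC x ∈ C ∧ ∀ y ∈ C, dist x (projC x) ≤ dist x y)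
    (h : Lp H 2 μ → ℝ)
    (hdef : ∀ x : Lp H 2 μ, h x = ∫ ω, φ (Metric.infDist (x ω) C) ∂μ)
    (γ : ℝ) (hγ : 0 < γ)
    -- `proxφ s = prox_{γφ} s` for every `s ∈ ℝ` :
    (proxφ : ℝ → ℝ)
    (hproxφ : ∀ s t : ℝ, γ * φ (proxφ s) + (s - proxφ s) ^ 2 / 2
      ≤ γ * φ t + (s - t) ^ 2 / 2)
    (x : Lp H 2 μ)
    -- `p = prox_{γh} x` :
    (p : Lp H 2 μ)
    (hp : ∀ y : Lp H 2 μ, γ * h p + ‖x - p‖ ^ 2 / 2 ≤ γ * h y + ‖x - y‖ ^ 2 / 2) :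
    ∀ᵐ ω ∂μ,
      (x ω ∉ C → p ω = projC (x ω) +
        (proxφ (Metric.infDist (x ω) C) / Metric.infDist (x ω) C) •
          (x ω - projC (x ω))) ∧
      (x ω ∈ C → p ω = x ω) := by
  classical
  have hne : C.Nonempty := ⟨0, hC0⟩
  have hneS : Nonempty C := hne.to_subtype
  set d : H → ℝ := fun v => Metric.infDist v C with hd_def
  have hβ' : ((Real.toNNReal β : NNReal) : ℝ) = β := Real.coe_toNNReal β hβ.le
  have projmem : ∀ v, projC v ∈ C := fun v => (hproj v).1
  have dist_proj : ∀ v, dist v (projC v) = d v := by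
    intro v
    refine le_antisymm ?_ (Metric.infDist_le_dist_of_mem (projmem v))
    show dist v (projC v) ≤ Metric.infDist v C
    rw [Metric.infDist_eq_iInf]
    exact le_ciInf fun w => (hproj v).2 w w.2
  have norm_proj : ∀ v, ‖v - projC v‖ = d v := by
    intro v; rw [← dist_eq_norm]; exact dist_proj v
  have projC_eq : ∀ v ∈ C, projC v = v := by
    intro v hv
    have h1 : dist v (projC v) = 0 := by
      rw [dist_proj v, hd_def]; exact Metric.infDist_zero_of_mem hv
    rw [dist_eq_zero] at h1
    exact h1.symm
  have d_nonneg : ∀ v, 0 ≤ d v := fun v => Metric.infDist_nonneg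
  have d_le_norm : ∀ v, d v ≤ ‖v‖ := by
    intro v
    have := Metric.infDist_le_dist_of_mem (s := C) (x := v) hC0
    simpa [hd_def] using this
  have projC_lip := aux_proj_lip hCconv projC hproj
  have projC_cont : Continuous projC := by
    have : LipschitzWith 1 projC := LipschitzWith.of_dist_le_mul fun a b => by
      simpa [dist_eq_norm] using projC_lip a b
    exact this.continuous
  -- φ facts
  have φc : Continuous φ := by
    have : Differentiable ℝ φ := fun t => (hderiv t).differentiableAt
    exact this.continuous
  have heven' : ∀ t : ℝ, φ |t| = φ t := by
    intro t; rcases abs_choice t with h1 | h1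
    · rw [h1]
    · rw [h1, heven]
  have φmono : ∀ a b : ℝ, 0 ≤ a → a ≤ b → φ a ≤ φ b := by
    intro a b ha hab
    rcases eq_or_lt_of_le (ha.trans hab) with hb | hb
    · have : a = b := le_antisymm hab (hb ▸ ha)
      rw [this]
    · have hb2 : (0:ℝ) < 2 * b := by linarith
      have l1 : (0:ℝ) ≤ (b + a) / (2 * b) := div_nonneg (by linarith) hb2.le
      have l2 : (0:ℝ) ≤ (b - a) / (2 * b) := div_nonneg (by linarith) hb2.le
      have l3 : (b + a) / (2 * b) + (b - a) / (2 * b) = 1 := by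
        field_simp
        ring
      have key := hconv.2 (Set.mem_univ b) (Set.mem_univ (-b)) l1 l2 l3
      simp only [smul_eq_mul, heven] at key
      have e1 : (b + a) / (2 * b) * b + (b - a) / (2 * b) * (-b) = a := by
        field_simp
        ring
      rw [e1] at key
      calc φ a ≤ (b + a) / (2 * b) * φ b + (b - a) / (2 * b) * φ b := key
        _ = ((b + a) / (2 * b) + (b - a) / (2 * b)) * φ b := by ring
        _ = φ b := by rw [l3, one_mul]
  have φ0le : ∀ t, φ 0 ≤ φ t := fun t => by
    rw [← heven' t]; exact φmono 0 |t| le_rfl (abs_nonneg t)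
  have φ'0 : φ' 0 = 0 := by
    have h1 : HasDerivAt (fun t : ℝ => φ (-t)) (φ' (-0) * (-1)) 0 :=
      HasDerivAt.comp 0 (hderiv (-0)) (hasDerivAt_neg 0)
    have h2 : (fun t : ℝ => φ (-t)) = φ := funext heven
    rw [h2] at h1
    have h3 := h1.unique (hderiv 0)
    simp at h3
    linarith
  have φ'mono : Monotone φ' := by
    have h1 : MonotoneOn (deriv φ) Set.univ :=
      hconv.monotoneOn_deriv (fun t _ => (hderiv t).differentiableAt)
    have h2 : deriv φ = φ' := funext fun t => (hderiv t).deriv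
    intro a b hab
    have := h1 (Set.mem_univ a) (Set.mem_univ b) hab
    rwa [h2] at this
  have φ'bound : ∀ t : ℝ, |φ' t| ≤ β * |t| := by
    intro t
    have := hlip.dist_le_mul t 0
    simpa [Real.dist_eq, φ'0, hβ'] using this
  have quad0 : ∀ t : ℝ, 0 ≤ t → |φ t - φ 0| ≤ β * t ^ 2 := by
    intro t ht
    have hf : ∀ s ∈ Set.Icc (0:ℝ) t, HasDerivWithinAt φ (φ' s) (Set.Icc 0 t) s :=
      fun s _ => (hderiv s).hasDerivWithinAt
    have hbd : ∀ s ∈ Set.Ico (0:ℝ) t, ‖φ' s‖ ≤ β * t := by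
      intro s hs
      rw [Real.norm_eq_abs]
      calc |φ' s| ≤ β * |s| := φ'bound s
        _ ≤ β * t := by
            rw [abs_of_nonneg hs.1]
            exact mul_le_mul_of_nonneg_left hs.2.le hβ.le
    have := norm_image_sub_le_of_norm_deriv_le_segment' hf hbd t (Set.right_mem_Icc.2 ht)
    rw [Real.norm_eq_abs] at this
    calc |φ t - φ 0| ≤ β * t * (t - 0) := this
      _ = β * t ^ 2 := by ring
  have quad : ∀ t : ℝ, |φ t - φ 0| ≤ β * t ^ 2 := by
    intro t
    have := quad0 |t| (abs_nonneg t)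
    rwa [heven' t, sq_abs] at this
  -- prox facts
  have prox_char : ∀ s : ℝ, γ * φ' (proxφ s) = s - proxφ s := by
    intro s
    set u := proxφ s with hu
    have hmin : IsLocalMin (fun t => γ * φ t + (s - t) ^ 2 / 2) u :=
      Filter.Eventually.of_forall fun t => hproxφ s t
    have h1 : HasDerivAt (fun t : ℝ => s - t) (-1) u := (hasDerivAt_id u).const_sub s
    have h2 := (h1.pow 2).div_const 2
    have h4 := (hderiv u).const_mul γ
    have hF := h4.add h2
    have h0 := hmin.hasDerivAt_eq_zero hF
    have h0' : γ * φ' u - (s - u) = 0 := by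
      rw [show ((2:ℕ):ℝ) = 2 from rfl] at h0
      linear_combination h0
    linarith
  have prox0 : ∀ s : ℝ, 0 ≤ s → 0 ≤ proxφ s ∧ proxφ s ≤ s := by
    intro s hs
    have hc := prox_char s
    constructor
    · by_contra hlt; push_neg at hlt
      have h1 : φ' (proxφ s) ≤ 0 := by
        have := φ'mono hlt.le; rwa [φ'0] at this
      nlinarith
    · by_contra hlt; push_neg at hlt
      have h1 : 0 ≤ φ' (proxφ s) := by
        have := φ'mono (hs.trans hlt.le); rwa [φ'0] at this
      nlinarith
  have prox_mono : Monotone proxφ := by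
    intro a b hab
    by_contra hlt; push_neg at hlt
    have h1 := prox_char a
    have h2 := prox_char b
    have h3 : φ' (proxφ b) ≤ φ' (proxφ a) := φ'mono hlt.le
    nlinarith
  have prox00 : proxφ 0 = 0 := le_antisymm (prox0 0 le_rfl).2 (prox0 0 le_rfl).1
  -- the pointwise prox map
  set T : H → H := fun v => projC v + (proxφ (d v) / d v) • (v - projC v) with hT_def
  have hTC : ∀ v ∈ C, T v = v := by
    intro v hv
    have h1 : projC v = v := projC_eq v hv
    simp [hT_def, h1]
  have hdpos : ∀ v, v ∉ C → 0 < d v := fun v hv =>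
    (hCclosed.notMem_iff_infDist_pos hne).1 hv
  have hTsub : ∀ v, v - T v = (1 - proxφ (d v) / d v) • (v - projC v) := by
    intro v
    rw [hT_def]
    simp only []
    module
  have hTsub2 : ∀ v, T v - projC v = (proxφ (d v) / d v) • (v - projC v) := by
    intro v
    rw [hT_def]
    simp only []
    module
  have hTnorm : ∀ v, v ∉ C → ‖v - T v‖ = d v - proxφ (d v) := by
    intro v hv
    have hd := hdpos v hv
    obtain ⟨hu0, hud⟩ := prox0 (d v) (d_nonneg v)
    rw [hTsub v, norm_smul, Real.norm_eq_abs, norm_proj v,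
      abs_of_nonneg (by rw [sub_nonneg]; exact (div_le_one hd).2 hud)]
    field_simp
  have hTdist : ∀ v, v ∉ C → d (T v) = proxφ (d v) := by
    intro v hv
    have hd := hdpos v hv
    obtain ⟨hu0, hud⟩ := prox0 (d v) (d_nonneg v)
    have hle : d (T v) ≤ proxφ (d v) := by
      have h1 : dist (T v) (projC v) = proxφ (d v) := by
        rw [dist_eq_norm, hTsub2 v, norm_smul, Real.norm_eq_abs, norm_proj v,
          abs_of_nonneg (div_nonneg hu0 (d_nonneg v))]
        field_simp
      calc d (T v) ≤ dist (T v) (projC v) := Metric.infDist_le_dist_of_mem (projmem v)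
        _ = proxφ (d v) := h1
    have hge : proxφ (d v) ≤ d (T v) := by
      have h2 : d v ≤ d (T v) + dist v (T v) := Metric.infDist_le_infDist_add_dist
      rw [dist_eq_norm, hTnorm v hv] at h2
      linarith
    linarith
  -- minimality of T v
  have dlip : ∀ v w : H, |d v - d w| ≤ ‖v - w‖ := by
    intro v w
    have h1 : d v ≤ d w + ‖v - w‖ := by
      have := Metric.infDist_le_infDist_add_dist (x := v) (y := w) (s := C)
      rw [dist_eq_norm] at this
      exact this
    have h2 : d w ≤ d v + ‖v - w‖ := by
      have := Metric.infDist_le_infDist_add_dist (x := w) (y := v) (s := C)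
      rw [dist_eq_norm, norm_sub_rev] at this
      exact this
    rw [abs_sub_le_iff]
    exact ⟨by linarith, by linarith⟩
  have minT : ∀ v w : H, γ * φ (d (T v)) + ‖v - T v‖ ^ 2 / 2
      ≤ γ * φ (d w) + ‖v - w‖ ^ 2 / 2 := by
    intro v w
    by_cases hv : v ∈ C
    · rw [hTC v hv]
      simp only [sub_self, norm_zero]
      have h1 : d v = 0 := Metric.infDist_zero_of_mem hv
      have h2 : φ (d v) ≤ φ (d w) := by rw [h1]; exact φ0le _
      have h3 := sq_nonneg ‖v - w‖
      nlinarith [mul_le_mul_of_nonneg_left h2 hγ.le]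
    · have hd := hdpos v hv
      have hL := dlip v w
      have h2 : (d v - d w) ^ 2 ≤ ‖v - w‖ ^ 2 := by
        nlinarith [abs_nonneg (d v - d w), norm_nonneg (v - w), sq_abs (d v - d w)]
      have h3 := hproxφ (d v) (d w)
      rw [hTdist v hv, hTnorm v hv]
      linarith
  -- uniqueness of the minimizer
  have uniq : ∀ v w : H, γ * φ (d w) + ‖v - w‖ ^ 2 / 2
      ≤ γ * φ (d (T v)) + ‖v - T v‖ ^ 2 / 2 → w = T v := by
    intro v w hw
    by_contra hne'
    set m : H := (2⁻¹ : ℝ) • (w + T v) with hm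
    have hdm : d m ≤ (d w + d (T v)) / 2 := by
      have hmem : (2⁻¹ : ℝ) • (projC w + projC (T v)) ∈ C := by
        have := hCconv (projmem w) (projmem (T v))
          (by norm_num : (0:ℝ) ≤ 2⁻¹) (by norm_num : (0:ℝ) ≤ 2⁻¹) (by norm_num)
        rwa [smul_add]
      calc d m ≤ dist m ((2⁻¹ : ℝ) • (projC w + projC (T v))) :=
            Metric.infDist_le_dist_of_mem hmem
        _ = ‖(2⁻¹ : ℝ) • ((w - projC w) + (T v - projC (T v)))‖ := by
            rw [dist_eq_norm]; congr 1; rw [hm]; module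
        _ ≤ 2⁻¹ * (‖w - projC w‖ + ‖T v - projC (T v)‖) := by
            rw [norm_smul, Real.norm_eq_abs]
            simp only [abs_of_nonneg (by norm_num : (0:ℝ) ≤ 2⁻¹)]
            exact mul_le_mul_of_nonneg_left (norm_add_le _ _) (by norm_num)
        _ = (d w + d (T v)) / 2 := by rw [norm_proj, norm_proj]; ring
    have hφm : φ (d m) ≤ (φ (d w) + φ (d (T v))) / 2 := by
      have h1 : φ (d m) ≤ φ ((d w + d (T v)) / 2) := φmono _ _ (d_nonneg m) hdm
      have h2 := hconv.2 (Set.mem_univ (d w)) (Set.mem_univ (d (T v)))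
        (by norm_num : (0:ℝ) ≤ 1/2) (by norm_num : (0:ℝ) ≤ 1/2) (by norm_num)
      simp only [smul_eq_mul] at h2
      have e1 : 1 / 2 * d w + 1 / 2 * d (T v) = (d w + d (T v)) / 2 := by ring
      rw [e1] at h2
      linarith
    have hnm : ‖v - m‖ ^ 2 = (2 * ‖v - w‖ ^ 2 + 2 * ‖v - T v‖ ^ 2 - ‖w - T v‖ ^ 2) / 4 := by
      have e : v - m = (2⁻¹ : ℝ) • ((v - w) + (v - T v)) := by rw [hm]; module
      have par := parallelogram_law_with_norm ℝ (v - w) (v - T v)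
      have e2 : (v - w) - (v - T v) = T v - w := by abel
      rw [e2] at par
      have e3 : ‖T v - w‖ = ‖w - T v‖ := norm_sub_rev _ _
      rw [e3] at par
      rw [e, norm_smul, Real.norm_eq_abs, abs_of_nonneg (by norm_num : (0:ℝ) ≤ 2⁻¹)]
      ring_nf
      ring_nf at par
      nlinarith [par]
    have hmin2 := minT v m
    have hwz : 0 < ‖w - T v‖ ^ 2 := by
      have h6 : w - T v ≠ 0 := sub_ne_zero.2 hne'
      exact pow_pos (norm_pos_iff.mpr h6) 2
    have hγφm : γ * φ (d m) ≤ (γ * φ (d w) + γ * φ (d (T v))) / 2 := by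
      have h5 := mul_le_mul_of_nonneg_left hφm hγ.le
      linarith
    linarith [hmin2, hnm, hwz, hγφm, hw]
  -- the candidate function
  set f : Ω → H := fun ω => T (x ω) with hf_def
  have hTbound : ∀ v : H, ‖T v‖ ≤ 3 * ‖v‖ := by
    intro v
    have hpn : ‖projC v‖ ≤ ‖v‖ := by
      have h1 := projC_lip v 0
      have h0 : projC 0 = 0 := projC_eq 0 hC0
      rw [h0, sub_zero, sub_zero] at h1
      exact h1
    have hscal : |proxφ (d v) / d v| ≤ 1 := by
      rcases eq_or_lt_of_le (d_nonneg v) with h0 | h0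
      · rw [← h0, div_zero]
        norm_num
      · obtain ⟨hu0, hud⟩ := prox0 (d v) (d_nonneg v)
        rw [abs_of_nonneg (div_nonneg hu0 (d_nonneg v))]
        exact (div_le_one h0).2 hud
    calc ‖T v‖ ≤ ‖projC v‖ + ‖(proxφ (d v) / d v) • (v - projC v)‖ := norm_add_le _ _
      _ = ‖projC v‖ + |proxφ (d v) / d v| * ‖v - projC v‖ := by
          rw [norm_smul, Real.norm_eq_abs]
      _ ≤ ‖v‖ + 1 * (‖v‖ + ‖projC v‖) := by
          gcongr
          exact norm_sub_le _ _
      _ ≤ 3 * ‖v‖ := by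
          rw [one_mul]
          linarith
  have hxm : AEStronglyMeasurable (fun ω => x ω) μ := (Lp.memLp x).aestronglyMeasurable
  have hfm : AEStronglyMeasurable f μ := by
    have hp1 : AEStronglyMeasurable (fun ω => projC (x ω)) μ :=
      projC_cont.comp_aestronglyMeasurable hxm
    have hd1 : AEMeasurable (fun ω => d (x ω)) μ :=
      ((Metric.continuous_infDist_pt C).comp_aestronglyMeasurable hxm).aemeasurable
    have hr1 : Measurable proxφ := prox_mono.measurable
    have hr2 : AEMeasurable (fun ω => proxφ (d (x ω))) μ := hr1.comp_aemeasurable hd1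
    have hr : AEMeasurable (fun ω => proxφ (d (x ω)) / d (x ω)) μ := AEMeasurable.div hr2 hd1
    have hvec : AEStronglyMeasurable (fun ω => x ω - projC (x ω)) μ := hxm.sub hp1
    exact hp1.add (hr.aestronglyMeasurable.smul hvec)
  have hmem : MemLp f 2 μ := by
    have h3x : MemLp (fun ω => 3 * ‖x ω‖) 2 μ := (Lp.memLp x).norm.const_mul 3
    refine MemLp.of_le h3x hfm ?_
    refine Filter.Eventually.of_forall fun ω => ?_
    have := hTbound (x ω)
    rw [Real.norm_eq_abs]
    calc ‖f ω‖ ≤ 3 * ‖x ω‖ := this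
      _ ≤ |3 * ‖x ω‖| := le_abs_self _
  set q : Lp H 2 μ := hmem.toLp f with hq_def
  have hq : (q : Ω → H) =ᵐ[μ] f := MemLp.coeFn_toLp hmem
  -- integrability facts
  have hnormsq_int : ∀ y : Lp H 2 μ, Integrable (fun ω => ‖y ω‖ ^ 2) μ := by
    intro y
    have h1 := MeasureTheory.L2.integrable_inner (𝕜 := ℝ) y y
    refine h1.congr ?_
    exact Filter.Eventually.of_forall fun ω => real_inner_self_eq_norm_sq _
  have hφint : ∀ g : Ω → H, AEStronglyMeasurable g μ →
      Integrable (fun ω => ‖g ω‖ ^ 2) μ → Integrable (fun ω => φ (d (g ω))) μ := by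
    intro g hgm hgint
    refine Integrable.mono' (g := fun ω => |φ 0| + β * ‖g ω‖ ^ 2) ?_ ?_ ?_
    · refine Integrable.add ?_ (hgint.const_mul β)
      rcases hfin with hμ | hφ0
      · have : IsFiniteMeasure μ := ⟨hμ⟩
        exact integrable_const _
      · rw [hφ0]
        simpa using integrable_const (0:ℝ)
    · exact (φc.comp (Metric.continuous_infDist_pt C)).comp_aestronglyMeasurable hgm
    · refine Filter.Eventually.of_forall fun ω => ?_
      have h1 := quad (d (g ω))
      have h2 : d (g ω) ≤ ‖g ω‖ := d_le_norm _
      have h3 := d_nonneg (g ω)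
      have h4 : (d (g ω)) ^ 2 ≤ ‖g ω‖ ^ 2 := by nlinarith
      have h5 := abs_sub_abs_le_abs_sub (φ (d (g ω))) (φ 0)
      have h6 : β * (d (g ω)) ^ 2 ≤ β * ‖g ω‖ ^ 2 := mul_le_mul_of_nonneg_left h4 hβ.le
      show ‖φ (d (g ω))‖ ≤ |φ 0| + β * ‖g ω‖ ^ 2
      rw [Real.norm_eq_abs]
      linarith
  have int_p_φ : Integrable (fun ω => φ (d (p ω))) μ :=
    hφint _ (Lp.memLp p).aestronglyMeasurable (hnormsq_int p)
  have int_q_φ : Integrable (fun ω => φ (d (q ω))) μ :=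
    hφint _ (Lp.memLp q).aestronglyMeasurable (hnormsq_int q)
  have int_sub : ∀ y : Lp H 2 μ, Integrable (fun ω => ‖x ω - y ω‖ ^ 2) μ := by
    intro y
    refine (hnormsq_int (x - y)).congr ?_
    filter_upwards [Lp.coeFn_sub x y] with ω hω
    rw [hω]
    simp [Pi.sub_apply]
  -- norm formula
  have hnorm_eq : ∀ y : Lp H 2 μ, ‖x - y‖ ^ 2 = ∫ ω, ‖x ω - y ω‖ ^ 2 ∂μ := by
    intro y
    have h1 : ‖x - y‖ ^ 2 = (inner ℝ (x - y) (x - y) : ℝ) :=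
      (real_inner_self_eq_norm_sq _).symm
    rw [h1, MeasureTheory.L2.inner_def]
    refine integral_congr_ae ?_
    filter_upwards [Lp.coeFn_sub x y] with ω hω
    rw [hω]
    simp only [Pi.sub_apply]
    rw [real_inner_self_eq_norm_sq]
  -- the two integral functionals
  set L : Ω → ℝ := fun ω => γ * φ (d (q ω)) + ‖x ω - q ω‖ ^ 2 / 2 with hL_def
  set R : Ω → ℝ := fun ω => γ * φ (d (p ω)) + ‖x ω - p ω‖ ^ 2 / 2 with hR_def
  have intL : Integrable L μ := (int_q_φ.const_mul γ).add ((int_sub q).div_const 2)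
  have intR : Integrable R μ := (int_p_φ.const_mul γ).add ((int_sub p).div_const 2)
  have hGa : ∀ᵐ ω ∂μ, L ω ≤ R ω := by
    filter_upwards [hq] with ω hω
    rw [hL_def, hR_def]
    simp only []
    rw [hω]
    exact minT (x ω) (p ω)
  have hIL : ∫ ω, L ω ∂μ = γ * h q + ‖x - q‖ ^ 2 / 2 := by
    rw [hL_def]
    simp only []
    rw [integral_add (int_q_φ.const_mul γ) ((int_sub q).div_const 2),
      integral_const_mul, integral_div, hdef q, hnorm_eq q]
  have hIR : ∫ ω, R ω ∂μ = γ * h p + ‖x - p‖ ^ 2 / 2 := by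
    rw [hR_def]
    simp only []
    rw [integral_add (int_p_φ.const_mul γ) ((int_sub p).div_const 2),
      integral_const_mul, integral_div, hdef p, hnorm_eq p]
  have hG0 : (fun ω => R ω - L ω) =ᵐ[μ] 0 := by
    refine (integral_eq_zero_iff_of_nonneg_ae ?_ (intR.sub intL)).1 ?_
    · filter_upwards [hGa] with ω hω
      simp only [Pi.zero_apply, Pi.sub_apply]
      linarith
    · show ∫ ω, (R ω - L ω) ∂μ = 0
      have h1 : ∫ ω, (R ω - L ω) ∂μ = (∫ ω, R ω ∂μ) - ∫ ω, L ω ∂μ :=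
        integral_sub intR intL
      have h2 := hp q
      have h3 : (∫ ω, L ω ∂μ) ≤ ∫ ω, R ω ∂μ := integral_mono_ae intL intR hGa
      rw [h1, hIR, hIL]
      linarith
  -- conclusion
  filter_upwards [hG0, hq] with ω hG hωq
  have hpx : p ω = T (x ω) := by
    refine uniq (x ω) (p ω) ?_
    have hG' : R ω - L ω = 0 := hG
    rw [hL_def, hR_def] at hG'
    simp only [] at hG'
    rw [hωq] at hG'
    have hfT : f ω = T (x ω) := rfl
    rw [hfT] at hG'
    linarith
  refine ⟨fun hxC => ?_, fun hxC => ?_⟩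
  · rw [hpx, hT_def]
  · rw [hpx]
    exact hTC _ hxC
end

section
/- Let H be a separable real Hilbert space, let K be a nonempty subset of ℕ, and let (e_k)_{k∈K} be an orthonormal basis of H. For every k ∈ K, let β_k > 0 and let φ_k : ℝ → ℝ be a differentiable convex function such that φ_k ≥ φ_k(0) = 0 and φ_k' is β_k-Lipschitzian. Suppose that β = sup_{k∈K} β_k < +∞ and define h(x) = Σ_{k∈K} φ_k(⟨x, e_k⟩) for every x ∈ H. Then h is a well-defined real-valued, convex, Fréchet differentiable function with a β-Lipschitzian gradient, and for every x ∈ H, ∇h(x) = Σ_{k∈K} φ_k'(⟨x, e_k⟩) e_k. -/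
open scoped Topology

lemma stmt15_key (φ ψ : ℝ → ℝ) (β : ℝ) (hβ : 0 ≤ β)
    (hd : ∀ t, HasDerivAt φ (ψ t) t)
    (hl : LipschitzWith (Real.toNNReal β) ψ) (a b : ℝ) :
    |φ b - φ a - ψ a * (b - a)| ≤ β * (b - a) ^ 2 := by
  set g : ℝ → ℝ := fun t => φ t - ψ a * t with hg
  have hgd : ∀ t, HasDerivAt g (ψ t - ψ a) t := by
    intro t
    have := (hd t).sub ((hasDerivAt_id t).const_mul (ψ a))
    simp only [mul_one] at this
    exact this
  have hmvt := (convex_uIcc a b).norm_image_sub_le_of_norm_hasDerivWithin_le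
    (f := g) (f' := fun t => ψ t - ψ a) (C := β * |b - a|)
    (fun t _ => (hgd t).hasDerivWithinAt)
    (fun t ht => by
      have h1 : |ψ t - ψ a| ≤ β * |t - a| := by
        have := hl.dist_le_mul t a
        rwa [Real.dist_eq, Real.dist_eq, Real.coe_toNNReal β hβ] at this
      have h2 : |t - a| ≤ |b - a| := Set.abs_sub_left_of_mem_uIcc ht
      calc ‖ψ t - ψ a‖ = |ψ t - ψ a| := rfl
        _ ≤ β * |t - a| := h1
        _ ≤ β * |b - a| := by nlinarith [abs_nonneg (t - a)])
    (Set.left_mem_uIcc) (Set.right_mem_uIcc)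
  have : ‖g b - g a‖ ≤ β * |b - a| * ‖b - a‖ := hmvt
  have hgba : g b - g a = φ b - φ a - ψ a * (b - a) := by ring
  rw [hgba] at this
  calc |φ b - φ a - ψ a * (b - a)| ≤ β * |b - a| * ‖b - a‖ := this
    _ = β * (b - a) ^ 2 := by
        rw [Real.norm_eq_abs, mul_assoc, abs_mul_abs_self]
        ring

/-- Let `H` be a separable real Hilbert space, `K` a nonempty subset of
`ℕ`, and `(e k)_{k ∈ K}` an orthonormal basis of `H`.  For each `k`, let `βk k > 0` and
`φ k : ℝ → ℝ` differentiable convex with `φ k ≥ φ k 0 = 0` and a `βk k`-Lipschitzian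
derivative.  Assume `β = sup_k βk k < ∞` and set `h x = ∑_{k ∈ K} φ k ⟨x, e k⟩`.  Then
`h` is well defined, real valued, convex, Fréchet differentiable with a `β`-Lipschitzian
gradient, and `∇h(x) = ∑_{k ∈ K} φ' k ⟨x, e k⟩ • e k`. -/
theorem stmt_15 {H : Type*} [NormedAddCommGroup H] [InnerProductSpace ℝ H] [CompleteSpace H]
    (K : Set ℕ) (hK : K.Nonempty)
    (e : HilbertBasis K ℝ H)
    (βk : K → ℝ) (hβk : ∀ k, 0 < βk k) (hbdd : BddAbove (Set.range βk))
    (φ : K → ℝ → ℝ) (hconv : ∀ k, ConvexOn ℝ Set.univ (φ k))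
    (hφ0 : ∀ k, φ k 0 = 0) (hφnn : ∀ k t, φ k 0 ≤ φ k t)
    (φ' : K → ℝ → ℝ) (hderiv : ∀ k t, HasDerivAt (φ k) (φ' k t) t)
    (hlip : ∀ k, LipschitzWith (Real.toNNReal (βk k)) (φ' k))
    (h : H → ℝ)
    (hdef : ∀ x, h x = ∑' k : K, φ k (inner ℝ x (e k))) :
    (∀ x : H, Summable (fun k : K => φ k (inner ℝ x (e k)))) ∧
    ConvexOn ℝ Set.univ h ∧
    (∀ x : H, HasGradientAt h (∑' k : K, φ' k (inner ℝ x (e k)) • e k) x) ∧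
    LipschitzWith (Real.toNNReal (⨆ k : K, βk k))
      (fun x => ∑' k : K, φ' k (inner ℝ x (e k)) • e k) := by
  haveI : Nonempty K := hK.to_subtype
  set β : ℝ := ⨆ k : K, βk k with hβdef
  have hβk_le : ∀ k : K, βk k ≤ β := fun k => le_ciSup hbdd k
  have hβ0 : 0 ≤ β := le_trans (hβk (Classical.arbitrary K)).le (hβk_le _)
  -- derivative at 0 vanishes
  have hφ'0 : ∀ k : K, φ' k 0 = 0 := by
    intro k
    have hmin : IsLocalMin (φ k) 0 := Filter.Eventually.of_forall (hφnn k)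
    exact hmin.hasDerivAt_eq_zero (hderiv k 0)
  -- the key estimate, with uniform constant β
  have key : ∀ (k : K) (a b : ℝ),
      |φ k b - φ k a - φ' k a * (b - a)| ≤ β * (b - a) ^ 2 := by
    intro k a b
    refine le_trans (stmt15_key (φ k) (φ' k) (βk k) (hβk k).le (hderiv k) (hlip k) a b) ?_
    have := sq_nonneg (b - a)
    nlinarith [hβk_le k]
  -- key with a = 0 : |φ k t| ≤ β t^2
  have key0 : ∀ (k : K) (t : ℝ), |φ k t| ≤ β * t ^ 2 := by
    intro k t
    have := key k 0 t
    simpa [hφ0 k, hφ'0 k] using this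
  -- lipschitz bound with uniform constant
  have hlipβ : ∀ (k : K) (a b : ℝ), |φ' k b - φ' k a| ≤ β * |b - a| := by
    intro k a b
    have := (hlip k).dist_le_mul b a
    rw [Real.dist_eq, Real.dist_eq, Real.coe_toNNReal _ (hβk k).le] at this
    refine le_trans this ?_
    have := abs_nonneg (b - a)
    nlinarith [hβk_le k]
  have hφ'bd : ∀ (k : K) (t : ℝ), |φ' k t| ≤ β * |t| := by
    intro k t
    have := hlipβ k 0 t
    simpa [hφ'0 k] using this
  -- Parseval
  have parseval : ∀ v : H, HasSum (fun k : K => (inner ℝ v (e k) : ℝ) ^ 2) (‖v‖ ^ 2) := by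
    intro v
    have := e.hasSum_inner_mul_inner v v
    rw [real_inner_self_eq_norm_sq] at this
    have heq : (fun k : K => (inner ℝ v (e k) : ℝ) ^ 2)
        = fun k : K => inner ℝ v (e k) * inner ℝ (e k) v := by
      funext k
      rw [real_inner_comm v (e k), sq]
    rw [heq]
    exact this
  -- summability of h's defining series
  have hsummφ : ∀ x : H, Summable (fun k : K => φ k (inner ℝ x (e k))) := by
    intro x
    refine Summable.of_abs (Summable.of_nonneg_of_le (fun k => abs_nonneg _)
      (fun k => key0 k _) ?_)
    exact (parseval x).summable.mul_left β
  -- summability of the gradient coefficients, squared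
  have hsumc : ∀ x : H, Summable (fun k : K => ‖φ' k (inner ℝ x (e k))‖ ^ 2) := by
    intro x
    refine Summable.of_nonneg_of_le (fun k => by positivity)
      (fun k => ?_) (((parseval x).summable.mul_left (β ^ 2)))
    have h1 := hφ'bd k (inner ℝ x (e k) : ℝ)
    have h2 := abs_nonneg (φ' k (inner ℝ x (e k) : ℝ))
    have h3 := abs_nonneg (inner ℝ x (e k) : ℝ)
    calc ‖φ' k (inner ℝ x (e k) : ℝ)‖ ^ 2 = |φ' k (inner ℝ x (e k) : ℝ)| ^ 2 := rfl
      _ ≤ (β * |(inner ℝ x (e k) : ℝ)|) ^ 2 := by nlinarith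
      _ = β ^ 2 * (inner ℝ x (e k) : ℝ) ^ 2 := by rw [mul_pow, sq_abs]
  -- the gradient vector: summability
  have hGsum : ∀ x : H, HasSum (fun k : K => φ' k (inner ℝ x (e k)) • e k)
      (∑' k : K, φ' k (inner ℝ x (e k)) • e k) := by
    intro x
    have hmem : Memℓp (fun k : K => φ' k (inner ℝ x (e k))) 2 := by
      apply memℓp_gen
      have h2 : ENNReal.toReal 2 = (2 : ℝ) := by norm_num
      rw [h2]
      have := hsumc x
      refine this.congr fun k => ?_
      rw [← Real.rpow_natCast ‖φ' k (inner ℝ x (e k))‖ 2]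
      norm_num
    exact ((e.hasSum_repr_symm ⟨_, hmem⟩).summable).hasSum
  -- coefficients of the gradient vector
  have hcoef : ∀ (x : H) (j : K),
      (inner ℝ (e j) (∑' k : K, φ' k (inner ℝ x (e k)) • e k) : ℝ) = φ' j (inner ℝ x (e j)) := by
    intro x j
    have h1 : HasSum (fun k : K => φ' k (inner ℝ x (e k)) * (inner ℝ (e j) (e k) : ℝ))
        (inner ℝ (e j) (∑' k : K, φ' k (inner ℝ x (e k)) • e k)) := by
      have := (hGsum x).mapL (innerSL ℝ (e j))
      simpa [inner_smul_right, mul_comm] using this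
    have horto := orthonormal_iff_ite.mp e.orthonormal
    have h2 : HasSum (fun k : K => φ' k (inner ℝ x (e k)) * (inner ℝ (e j) (e k) : ℝ))
        (φ' j (inner ℝ x (e j))) := by
      have base : HasSum (fun k : K => if k = j then φ' j (inner ℝ x (e j)) else 0)
          (φ' j (inner ℝ x (e j))) := hasSum_ite_eq j _
      have heq : (fun k : K => φ' k (inner ℝ x (e k)) * (inner ℝ (e j) (e k) : ℝ))
          = fun k => if k = j then φ' j (inner ℝ x (e j)) else 0 := by
        funext k
        rcases eq_or_ne k j with rfl | hkj
        · rw [horto k k, if_pos rfl, if_pos rfl, mul_one]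
        · rw [horto j k, if_neg (Ne.symm hkj), if_neg hkj, mul_zero]
      rw [heq]
      exact base
    exact h1.unique h2
  -- Lipschitz estimate for the gradient map
  have hlipG : ∀ x y : H,
      ‖(∑' k : K, φ' k (inner ℝ x (e k)) • e k) - (∑' k : K, φ' k (inner ℝ y (e k)) • e k)‖
        ≤ β * ‖x - y‖ := by
    intro x y
    set Gx := ∑' k : K, φ' k (inner ℝ x (e k)) • e k with hGx
    set Gy := ∑' k : K, φ' k (inner ℝ y (e k)) • e k with hGy
    have hsq : HasSum
        (fun k : K => (φ' k (inner ℝ x (e k)) - φ' k (inner ℝ y (e k))) ^ 2) (‖Gx - Gy‖ ^ 2) := by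
      have hp := parseval (Gx - Gy)
      have heq : (fun k : K => (inner ℝ (Gx - Gy) (e k) : ℝ) ^ 2)
          = fun k : K => (φ' k (inner ℝ x (e k)) - φ' k (inner ℝ y (e k))) ^ 2 := by
        funext k
        rw [inner_sub_left, real_inner_comm (e k) Gx, real_inner_comm (e k) Gy, hGx, hGy,
          hcoef x k, hcoef y k]
      rw [heq] at hp
      exact hp
    have hsq2 : HasSum (fun k : K => β ^ 2 * (inner ℝ (x - y) (e k) : ℝ) ^ 2)
        (β ^ 2 * ‖x - y‖ ^ 2) := (parseval (x - y)).mul_left (β ^ 2)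
    have hle : ‖Gx - Gy‖ ^ 2 ≤ β ^ 2 * ‖x - y‖ ^ 2 := by
      refine hasSum_le (fun k => ?_) hsq hsq2
      have hl := hlipβ k (inner ℝ y (e k)) (inner ℝ x (e k))
      have habs : |(inner ℝ x (e k) : ℝ) - inner ℝ y (e k)| = |(inner ℝ (x - y) (e k) : ℝ)| := by
        rw [inner_sub_left]
      rw [habs] at hl
      have := abs_nonneg ((inner ℝ (x - y) (e k)) : ℝ)
      calc (φ' k (inner ℝ x (e k)) - φ' k (inner ℝ y (e k))) ^ 2
          = |φ' k (inner ℝ x (e k)) - φ' k (inner ℝ y (e k))| ^ 2 := (sq_abs _).symm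
        _ ≤ (β * |(inner ℝ (x - y) (e k) : ℝ)|) ^ 2 := by
            have := abs_nonneg (φ' k (inner ℝ x (e k)) - φ' k (inner ℝ y (e k)))
            nlinarith
        _ = β ^ 2 * (inner ℝ (x - y) (e k) : ℝ) ^ 2 := by rw [mul_pow, sq_abs]
    have h1 : ‖Gx - Gy‖ ^ 2 ≤ (β * ‖x - y‖) ^ 2 := by nlinarith
    have h2 := Real.sqrt_le_sqrt h1
    rwa [Real.sqrt_sq (norm_nonneg _), Real.sqrt_sq (by positivity)] at h2
  -- the main second-order bound for `h`
  have mainbound : ∀ x y : H,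
      |h y - h x - (inner ℝ (∑' k : K, φ' k (inner ℝ x (e k)) • e k) (y - x) : ℝ)|
        ≤ β * ‖y - x‖ ^ 2 := by
    intro x y
    set G := ∑' k : K, φ' k (inner ℝ x (e k)) • e k with hG
    have hinner : HasSum (fun k : K => φ' k (inner ℝ x (e k)) * (inner ℝ (y - x) (e k) : ℝ))
        ((inner ℝ (y - x) G : ℝ)) := by
      have h0 := (hGsum x).mapL (innerSL ℝ (y - x))
      rw [← hG] at h0
      simpa only [innerSL_apply_apply, real_inner_smul_right, mul_comm] using h0
    have hs1 : HasSum (fun k : K => φ k (inner ℝ y (e k))) (h y) := by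
      rw [hdef y]; exact (hsummφ y).hasSum
    have hs2 : HasSum (fun k : K => φ k (inner ℝ x (e k))) (h x) := by
      rw [hdef x]; exact (hsummφ x).hasSum
    have hS : HasSum (fun k : K => φ k (inner ℝ y (e k)) - φ k (inner ℝ x (e k))
        - φ' k (inner ℝ x (e k)) * (inner ℝ (y - x) (e k) : ℝ))
        (h y - h x - (inner ℝ (y - x) G : ℝ)) := (hs1.sub hs2).sub hinner
    have hterm : ∀ k : K, |φ k (inner ℝ y (e k)) - φ k (inner ℝ x (e k))
        - φ' k (inner ℝ x (e k)) * (inner ℝ (y - x) (e k) : ℝ)|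
        ≤ β * (inner ℝ (y - x) (e k) : ℝ) ^ 2 := by
      intro k
      have := key k (inner ℝ x (e k)) (inner ℝ y (e k))
      rwa [← inner_sub_left] at this
    have habs : Summable (fun k : K => |φ k (inner ℝ y (e k)) - φ k (inner ℝ x (e k))
        - φ' k (inner ℝ x (e k)) * (inner ℝ (y - x) (e k) : ℝ)|) :=
      Summable.of_nonneg_of_le (fun k => abs_nonneg _) hterm
        ((parseval (y - x)).summable.mul_left β)
    have hcomm : (inner ℝ G (y - x) : ℝ) = (inner ℝ (y - x) G : ℝ) := real_inner_comm _ _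
    rw [hcomm]
    calc |h y - h x - (inner ℝ (y - x) G : ℝ)|
        = ‖∑' k : K, (φ k (inner ℝ y (e k)) - φ k (inner ℝ x (e k))
            - φ' k (inner ℝ x (e k)) * (inner ℝ (y - x) (e k) : ℝ))‖ := by rw [hS.tsum_eq]; rfl
      _ ≤ ∑' k : K, |φ k (inner ℝ y (e k)) - φ k (inner ℝ x (e k))
            - φ' k (inner ℝ x (e k)) * (inner ℝ (y - x) (e k) : ℝ)| := norm_tsum_le_tsum_norm habs
      _ ≤ ∑' k : K, β * (inner ℝ (y - x) (e k) : ℝ) ^ 2 :=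
            Summable.tsum_le_tsum hterm habs ((parseval (y - x)).summable.mul_left β)
      _ = β * ‖y - x‖ ^ 2 := ((parseval (y - x)).mul_left β).tsum_eq
  refine ⟨hsummφ, ?_, ?_, ?_⟩
  · -- convexity
    refine ⟨convex_univ, ?_⟩
    intro x _ y _ a b ha hb hab
    rw [hdef, hdef, hdef]
    have hterm : ∀ k : K, φ k (inner ℝ (a • x + b • y) (e k))
        ≤ a * φ k (inner ℝ x (e k)) + b * φ k (inner ℝ y (e k)) := by
      intro k
      have hk := (hconv k).2 (Set.mem_univ (inner ℝ x (e k) : ℝ))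
        (Set.mem_univ (inner ℝ y (e k) : ℝ)) ha hb hab
      simpa [inner_add_left, real_inner_smul_left, smul_eq_mul] using hk
    have hsA : Summable (fun k : K => a * φ k (inner ℝ x (e k))) := (hsummφ x).mul_left a
    have hsB : Summable (fun k : K => b * φ k (inner ℝ y (e k))) := (hsummφ y).mul_left b
    calc (∑' k : K, φ k (inner ℝ (a • x + b • y) (e k)))
        ≤ ∑' k : K, (a * φ k (inner ℝ x (e k)) + b * φ k (inner ℝ y (e k))) :=
          Summable.tsum_le_tsum hterm (hsummφ (a • x + b • y)) (hsA.add hsB)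
      _ = a • (∑' k : K, φ k (inner ℝ x (e k))) + b • (∑' k : K, φ k (inner ℝ y (e k))) := by
          rw [Summable.tsum_add hsA hsB, tsum_mul_left, tsum_mul_left]; simp [smul_eq_mul]
  · -- gradient
    intro x
    rw [hasGradientAt_iff_isLittleO, Asymptotics.isLittleO_iff]
    intro c hc
    have hball : Metric.closedBall x (c / (β + 1)) ∈ 𝓝 x :=
      Metric.closedBall_mem_nhds x (div_pos hc (by linarith))
    filter_upwards [hball] with y hy
    have hy' : ‖y - x‖ ≤ c / (β + 1) := by
      rwa [Metric.mem_closedBall, dist_eq_norm] at hy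
    have hy'' : (β + 1) * ‖y - x‖ ≤ c := by
      rw [le_div_iff₀ (by positivity : (0:ℝ) < β + 1)] at hy'
      linarith [hy']
    have hb := mainbound x y
    have hgoal : |h y - h x - (inner ℝ (∑' k : K, φ' k (inner ℝ x (e k)) • e k) (y - x) : ℝ)|
        ≤ c * ‖y - x‖ := by
      refine le_trans hb ?_
      have h1 := norm_nonneg (y - x)
      nlinarith
    simpa [Real.norm_eq_abs] using hgoal
  · -- Lipschitz gradient
    refine LipschitzWith.of_dist_le_mul fun x y => ?_
    rw [dist_eq_norm, dist_eq_norm, Real.coe_toNNReal _ hβ0]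
    exact hlipG x y
end

section
/- Let H be a separable real Hilbert space, let K be a nonempty subset of ℕ, and let (e_k)_{k∈K} be an orthonormal basis of H. For every k ∈ K, let β_k > 0 and let φ_k : ℝ → ℝ be a differentiable convex function such that φ_k ≥ φ_k(0) = 0 and φ_k' is β_k-Lipschitzian. Suppose that sup_{k∈K} β_k < +∞ and define h(x) = Σ_{k∈K} φ_k(⟨x, e_k⟩) for every x ∈ H. Then for every γ > 0 and every x ∈ H, prox_{γh} x = Σ_{k∈K} (prox_{γφ_k} ⟨x, e_k⟩) e_k. -/
/-- Strong prox inequality from convexity and minimality. -/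
lemma aux_strong (γ : ℝ) (hγ : 0 < γ) (f : ℝ → ℝ) (hf : ConvexOn ℝ Set.univ f)
    (s a : ℝ) (ha : ∀ t, γ * f a + (s - a) ^ 2 / 2 ≤ γ * f t + (s - t) ^ 2 / 2) (t : ℝ) :
    γ * f a + (s - a) ^ 2 / 2 + (t - a) ^ 2 / 4 ≤ γ * f t + (s - t) ^ 2 / 2 := by
  have hm := ha ((a + t) / 2)
  have hc : f ((a + t) / 2) ≤ (f a + f t) / 2 := by
    have h2 := hf.2 (Set.mem_univ a) (Set.mem_univ t)
      (by norm_num : (0:ℝ) ≤ 1/2) (by norm_num : (0:ℝ) ≤ 1/2) (by norm_num)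
    rw [smul_eq_mul, smul_eq_mul, smul_eq_mul, smul_eq_mul] at h2
    have harg : (1/2 : ℝ) * a + (1/2 : ℝ) * t = (a + t) / 2 := by ring
    rw [harg] at h2
    linarith
  have hc' := mul_le_mul_of_nonneg_left hc hγ.le
  nlinarith [hm, hc']

/-- Convex differentiable function with min 0 at 0 and Lipschitz derivative: quadratic bound. -/
lemma aux_quad (f f' : ℝ → ℝ) (hf : ConvexOn ℝ Set.univ f) (hf0 : f 0 = 0)
    (hd : ∀ t, HasDerivAt f (f' t) t) (β : ℝ) (hβ : 0 < β)
    (habs : ∀ t, |f' t| ≤ β * |t|) (t : ℝ) : f t ≤ β * t ^ 2 := by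
  rcases lt_trichotomy t 0 with ht | ht | ht
  · have hs := hf.deriv_le_slope (Set.mem_univ t) (Set.mem_univ 0) ht (hd t).differentiableAt
    rw [(hd t).deriv, slope_def_field, hf0] at hs
    -- hs : f' t ≤ (0 - f t) / (0 - t)
    have h1 : |f' t| ≤ β * (-t) := by have := habs t; rwa [abs_of_neg ht] at this
    have h2 : -(β * (-t)) ≤ f' t := neg_le_of_abs_le h1
    have h3 : (0 - f t) / (0 - t) = f t / t := by rw [zero_sub, zero_sub, neg_div_neg_eq]
    rw [h3] at hs
    have h4 : f t ≤ f' t * t := by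
      rw [le_div_iff_of_neg ht] at hs
      linarith
    nlinarith [h2, ht]
  · subst ht; simp [hf0]
  · have hs := hf.slope_le_deriv (Set.mem_univ 0) (Set.mem_univ t) ht (hd t).differentiableAt
    rw [(hd t).deriv, slope_def_field, hf0] at hs
    -- hs : (f t - 0) / (t - 0) ≤ f' t
    have h1 : f' t ≤ β * t := by
      have := (abs_le.mp (habs t)).2; rwa [abs_of_pos ht] at this
    have h4 : f t ≤ f' t * t := by
      rw [sub_zero, sub_zero, div_le_iff₀ ht] at hs; linarith
    nlinarith

lemma aux_parseval {H : Type*} [NormedAddCommGroup H] [InnerProductSpace ℝ H] [CompleteSpace H]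
    {K : Set ℕ} (e : HilbertBasis K ℝ H) (y : H) :
    HasSum (fun k : K => (inner ℝ y (e k) : ℝ) ^ 2) (‖y‖ ^ 2) := by
  have h1 := e.hasSum_inner_mul_inner y y
  rw [real_inner_self_eq_norm_sq] at h1
  have : (fun k : K => (inner ℝ y (e k) : ℝ) ^ 2)
      = fun k : K => (inner ℝ y (e k) : ℝ) * inner ℝ (e k) y := by
    funext k; rw [sq, real_inner_comm (e k) y]
  rw [this]
  exact h1

/-- In the setting of Statement 15 (`h x = ∑_{k ∈ K} φ k ⟨x, e k⟩`
expanded in an orthonormal basis `(e k)_{k ∈ K}`), for every `γ > 0` and every `x ∈ H`,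
`prox_{γh} x = ∑_{k ∈ K} (prox_{γ φ k} ⟨x, e k⟩) • e k`. -/
theorem stmt_16 {H : Type*} [NormedAddCommGroup H] [InnerProductSpace ℝ H] [CompleteSpace H]
    (K : Set ℕ) (hK : K.Nonempty)
    (e : HilbertBasis K ℝ H)
    (βk : K → ℝ) (hβk : ∀ k, 0 < βk k) (hbdd : BddAbove (Set.range βk))
    (φ : K → ℝ → ℝ) (hconv : ∀ k, ConvexOn ℝ Set.univ (φ k))
    (hφ0 : ∀ k, φ k 0 = 0) (hφnn : ∀ k t, φ k 0 ≤ φ k t)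
    (φ' : K → ℝ → ℝ) (hderiv : ∀ k t, HasDerivAt (φ k) (φ' k t) t)
    (hlip : ∀ k, LipschitzWith (Real.toNNReal (βk k)) (φ' k))
    (h : H → ℝ)
    (hdef : ∀ x, h x = ∑' k : K, φ k (inner ℝ x (e k)))
    (γ : ℝ) (hγ : 0 < γ)
    -- `P k s = prox_{γ φ k} s` for every `k ∈ K`, `s ∈ ℝ` :
    (P : K → ℝ → ℝ)
    (hP : ∀ k, ∀ s t : ℝ, γ * φ k (P k s) + (s - P k s) ^ 2 / 2
      ≤ γ * φ k t + (s - t) ^ 2 / 2)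
    (x : H)
    -- `p = prox_{γh} x` :
    (p : H)
    (hp : ∀ y : H, γ * h p + ‖x - p‖ ^ 2 / 2 ≤ γ * h y + ‖x - y‖ ^ 2 / 2) :
    p = ∑' k : K, P k (inner ℝ x (e k)) • e k := by
  obtain ⟨B, hB⟩ := hbdd
  have hBk : ∀ k, βk k ≤ B := fun k => hB ⟨k, rfl⟩
  -- derivative vanishes at 0
  have hφ'0 : ∀ k, φ' k 0 = 0 := by
    intro k
    have hmin : IsLocalMin (φ k) 0 := Filter.Eventually.of_forall (fun t => hφnn k t)
    exact hmin.hasDerivAt_eq_zero (hderiv k 0)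
  have habs : ∀ k t, |φ' k t| ≤ βk k * |t| := by
    intro k t
    have := (hlip k).dist_le_mul t 0
    simpa [Real.dist_eq, hφ'0 k, Real.coe_toNNReal _ (hβk k).le] using this
  have hφnn' : ∀ k t, 0 ≤ φ k t := fun k t => (hφ0 k) ▸ hφnn k t
  have hφle : ∀ k t, φ k t ≤ B * t ^ 2 := by
    intro k t
    have := aux_quad (φ k) (φ' k) (hconv k) (hφ0 k) (hderiv k) (βk k) (hβk k) (habs k) t
    nlinarith [sq_nonneg t, hBk k]
  -- coordinates
  set s : K → ℝ := fun k => inner ℝ x (e k) with hs_def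
  set qk : K → ℝ := fun k => P k (s k) with hqk_def
  -- bound on qk
  have hqb : ∀ k, (qk k) ^ 2 ≤ 4 * (s k) ^ 2 := by
    intro k
    have h0 := hP k (s k) 0
    rw [hφ0 k] at h0
    have h1 := mul_nonneg hγ.le (hφnn' k (P k (s k)))
    have : qk k = P k (s k) := rfl
    nlinarith [sq_nonneg (2 * s k - qk k), h0]
  have hsum_s : Summable fun k => (s k) ^ 2 := (aux_parseval e x).summable
  have hsum_q : Summable fun k => (qk k) ^ 2 :=
    Summable.of_nonneg_of_le (fun k => sq_nonneg _) hqb (hsum_s.mul_left 4)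
  -- build q
  have hmem : Memℓp qk 2 := memℓp_gen (by
    have : (fun k : K => ‖qk k‖ ^ (2 : ENNReal).toReal) = fun k => (qk k) ^ 2 := by
      funext k
      rw [ENNReal.toReal_ofNat, Real.norm_eq_abs,
        show ((2:ℝ)) = ((2:ℕ):ℝ) by norm_num, Real.rpow_natCast, sq_abs]
    rw [this]; exact hsum_q)
  set Q : lp (fun _ : K => ℝ) 2 := ⟨qk, hmem⟩ with hQ_def
  set q : H := e.repr.symm Q with hq_def
  have hqsum : HasSum (fun k : K => P k (inner ℝ x (e k)) • e k) q := by
    have := e.hasSum_repr_symm Q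
    exact this
  -- coordinates of q
  have hqc : ∀ k, (inner ℝ q (e k) : ℝ) = qk k := by
    intro k
    rw [real_inner_comm, ← e.repr_apply_apply, hq_def, LinearIsometryEquiv.apply_symm_apply]
  set pk : K → ℝ := fun k => inner ℝ p (e k) with hpk_def
  -- Parseval for the differences
  have hxq : HasSum (fun k : K => (s k - qk k) ^ 2) (‖x - q‖ ^ 2) := by
    have h1 := aux_parseval e (x - q)
    have : (fun k : K => (inner ℝ (x - q) (e k) : ℝ) ^ 2) = fun k : K => (s k - qk k) ^ 2 := by
      funext k; rw [inner_sub_left, hqc k]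
    rwa [this] at h1
  have hxp : HasSum (fun k : K => (s k - pk k) ^ 2) (‖x - p‖ ^ 2) := by
    have h1 := aux_parseval e (x - p)
    have : (fun k : K => (inner ℝ (x - p) (e k) : ℝ) ^ 2) = fun k : K => (s k - pk k) ^ 2 := by
      funext k; rw [inner_sub_left]
    rwa [this] at h1
  have hpq : HasSum (fun k : K => (pk k - qk k) ^ 2) (‖p - q‖ ^ 2) := by
    have h1 := aux_parseval e (p - q)
    have : (fun k : K => (inner ℝ (p - q) (e k) : ℝ) ^ 2) = fun k : K => (pk k - qk k) ^ 2 := by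
      funext k; rw [inner_sub_left, hqc k]
    rwa [this] at h1
  -- summability of φ terms
  have hsum_p2 : Summable fun k => (pk k) ^ 2 := (aux_parseval e p).summable
  have hφp : Summable fun k => φ k (pk k) :=
    Summable.of_nonneg_of_le (fun k => hφnn' k _) (fun k => hφle k _) (hsum_p2.mul_left B)
  have hφq : Summable fun k => φ k (qk k) :=
    Summable.of_nonneg_of_le (fun k => hφnn' k _) (fun k => hφle k _) (hsum_q.mul_left B)
  -- h values
  have hhq : h q = ∑' k, φ k (qk k) := by
    rw [hdef q]; exact tsum_congr fun k => by rw [hqc k]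
  have hhp : h p = ∑' k, φ k (pk k) := hdef p
  -- key pointwise inequality
  have key5 : ∀ k : K, γ * φ k (qk k) + (s k - qk k) ^ 2 / 2 + (pk k - qk k) ^ 2 / 4
      ≤ γ * φ k (pk k) + (s k - pk k) ^ 2 / 2 := by
    intro k
    exact aux_strong γ hγ (φ k) (hconv k) (s k) (qk k) (fun t => hP k (s k) t) (pk k)
  -- sum up
  have Hq1 : HasSum (fun k => γ * φ k (qk k)) (γ * h q) := by
    rw [hhq]; exact hφq.hasSum.mul_left γ
  have Hp1 : HasSum (fun k => γ * φ k (pk k)) (γ * h p) := by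
    rw [hhp]; exact hφp.hasSum.mul_left γ
  have HL := (Hq1.add (hxq.div_const 2)).add (hpq.div_const 4)
  have HR := Hp1.add (hxp.div_const 2)
  have hle := hasSum_le key5 HL HR
  have hppq := hp q
  have hn2 : ‖p - q‖ ^ 2 ≤ 0 := by linarith
  have hn0 : p - q = 0 := by
    have : ‖p - q‖ = 0 := by nlinarith [norm_nonneg (p - q)]
    exact norm_eq_zero.mp this
  rw [hqsum.tsum_eq]
  exact sub_eq_zero.mp hn0
end

section
/- Let H be a real Hilbert space, let φ : H → (−∞, +∞] be a proper lower semicontinuous convex function, let β > 0, and define h = β q − (β q) □ φ, where q = ‖·‖²/2 and □ denotes infimal convolution. Then h : H → ℝ is convex and Fréchet differentiable with a β-Lipschitzian gradient; for every x ∈ H, ∇h(x) = β prox_{φ/β} x; and for every γ > 0 and every x ∈ H, prox_{γh} x = x − βγ prox_{φ/(β(1+βγ))}( x/(1+βγ) ). -/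
set_option linter.unusedSectionVars false

section aux19
variable {H : Type*} [NormedAddCommGroup H] [InnerProductSpace ℝ H]

private lemma aux19_limit {a b C : ℝ} (hC : 0 ≤ C)
    (hk : ∀ t : ℝ, 0 < t → t ≤ 1 → a ≤ b + t * C) : a ≤ b := by
  refine le_of_forall_pos_le_add fun ε hε => ?_
  have ht0 : 0 < min 1 (ε / (C + 1)) := lt_min one_pos (by positivity)
  have hkey := hk _ ht0 (min_le_left _ _)
  have htC : min 1 (ε / (C + 1)) * C ≤ ε := by
    calc min 1 (ε / (C + 1)) * C ≤ (ε / (C + 1)) * C :=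
          mul_le_mul_of_nonneg_right (min_le_right _ _) hC
      _ ≤ ε := by
          rw [div_mul_eq_mul_div, div_le_iff₀ (by linarith)]; nlinarith
  linarith

private lemma aux19_fin (φ : H → EReal) (hproper : ∃ x, φ x ≠ ⊤) (hnebot : ∀ x, φ x ≠ ⊥)
    (μ : ℝ) (hμ : 0 < μ) (P : H → H)
    (hP : ∀ x y : H, ((μ⁻¹ : ℝ) : EReal) * φ (P x) + ((‖x - P x‖ ^ 2 / 2 : ℝ) : EReal)
        ≤ ((μ⁻¹ : ℝ) : EReal) * φ y + ((‖x - y‖ ^ 2 / 2 : ℝ) : EReal)) :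
    ∀ x : H, φ (P x) ≠ ⊤ := by
  intro x hx
  obtain ⟨x₀, hx₀⟩ := hproper
  obtain ⟨r₀, hr₀⟩ : ∃ r : ℝ, φ x₀ = (r : EReal) :=
    ⟨(φ x₀).toReal, (EReal.coe_toReal hx₀ (hnebot x₀)).symm⟩
  have h0 := hP x x₀
  have hμ' : (0 : EReal) < ((μ⁻¹ : ℝ) : EReal) := by exact_mod_cast inv_pos.mpr hμ
  have hl : ((μ⁻¹ : ℝ) : EReal) * φ (P x) + ((‖x - P x‖ ^ 2 / 2 : ℝ) : EReal) = ⊤ := by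
    rw [hx, EReal.mul_top_of_pos hμ', EReal.top_add_coe]
  have hr : ((μ⁻¹ : ℝ) : EReal) * φ x₀ + ((‖x - x₀‖ ^ 2 / 2 : ℝ) : EReal)
      = ((μ⁻¹ * r₀ + ‖x - x₀‖ ^ 2 / 2 : ℝ) : EReal) := by
    rw [hr₀, ← EReal.coe_mul, ← EReal.coe_add]
  rw [hl, hr] at h0
  exact (EReal.coe_lt_top _).not_ge h0

private lemma aux19_vi (φ : H → EReal) (hnebot : ∀ x, φ x ≠ ⊥)
    (hconv : ∀ x y : H, ∀ a b : ℝ, 0 ≤ a → 0 ≤ b → a + b = 1 →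
      φ (a • x + b • y) ≤ (a : EReal) * φ x + (b : EReal) * φ y)
    (μ : ℝ) (hμ : 0 < μ) (P : H → H)
    (hP : ∀ x y : H, ((μ⁻¹ : ℝ) : EReal) * φ (P x) + ((‖x - P x‖ ^ 2 / 2 : ℝ) : EReal)
        ≤ ((μ⁻¹ : ℝ) : EReal) * φ y + ((‖x - y‖ ^ 2 / 2 : ℝ) : EReal))
    (hfin : ∀ x : H, φ (P x) ≠ ⊤) :
    ∀ x y : H, φ y ≠ ⊤ →
      (inner ℝ (x - P x) (y - P x) : ℝ) ≤ μ⁻¹ * ((φ y).toReal - (φ (P x)).toReal) := by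
  intro x y hy
  set p := P x with hp
  set fp := (φ p).toReal with hfpdef
  set fy := (φ y).toReal with hfydef
  have hfp : φ p = (fp : EReal) := (EReal.coe_toReal (hfin x) (hnebot p)).symm
  have hfy : φ y = (fy : EReal) := (EReal.coe_toReal hy (hnebot y)).symm
  refine aux19_limit (C := ‖y - p‖ ^ 2 / 2) (by positivity) fun t ht ht1 => ?_
  set pt := p + t • (y - p) with hpt
  have hcomb : (1 - t) • p + t • y = pt := by
    rw [hpt, sub_smul, one_smul, smul_sub]; abel
  have hφpt : φ pt ≤ (((1 - t) * fp + t * fy : ℝ) : EReal) := by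
    calc φ pt = φ ((1 - t) • p + t • y) := by rw [hcomb]
      _ ≤ ((1 - t : ℝ) : EReal) * φ p + ((t : ℝ) : EReal) * φ y :=
          hconv p y (1 - t) t (by linarith) ht.le (by ring)
      _ = _ := by rw [hfp, hfy, ← EReal.coe_mul, ← EReal.coe_mul, ← EReal.coe_add]
  have hptnetop : φ pt ≠ ⊤ := by
    intro hc; rw [hc] at hφpt; exact (EReal.coe_lt_top _).not_ge hφpt
  set s := (φ pt).toReal with hs
  have hφpt' : φ pt = (s : EReal) := (EReal.coe_toReal hptnetop (hnebot pt)).symm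
  have hsle : s ≤ (1 - t) * fp + t * fy := by
    rw [hφpt'] at hφpt; exact_mod_cast hφpt
  have h0 := hP x pt
  rw [← hp, hfp, hφpt', ← EReal.coe_mul, ← EReal.coe_mul, ← EReal.coe_add, ← EReal.coe_add] at h0
  have h0' : μ⁻¹ * fp + ‖x - p‖ ^ 2 / 2 ≤ μ⁻¹ * s + ‖x - pt‖ ^ 2 / 2 := by exact_mod_cast h0
  have hexp : ‖x - pt‖ ^ 2
      = ‖x - p‖ ^ 2 - 2 * t * (inner ℝ (x - p) (y - p) : ℝ) + t ^ 2 * ‖y - p‖ ^ 2 := by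
    have e : x - pt = (x - p) - t • (y - p) := by rw [hpt]; abel
    rw [e, norm_sub_sq_real, real_inner_smul_right, norm_smul, Real.norm_eq_abs, abs_of_pos ht,
      mul_pow]
    ring
  have hinv : (0:ℝ) ≤ μ⁻¹ := (inv_pos.mpr hμ).le
  have hmono := mul_le_mul_of_nonneg_left hsle hinv
  have h2 : t * (inner ℝ (x - p) (y - p) : ℝ)
      ≤ t * (μ⁻¹ * (fy - fp) + t * (‖y - p‖ ^ 2 / 2)) := by nlinarith [h0', hexp, hmono]
  have := (mul_le_mul_iff_right₀ ht).mp h2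
  linarith

private lemma aux19_firm (φ : H → EReal) (μ : ℝ) (P : H → H)
    (hfin : ∀ x : H, φ (P x) ≠ ⊤)
    (hvi : ∀ x y : H, φ y ≠ ⊤ →
      (inner ℝ (x - P x) (y - P x) : ℝ) ≤ μ⁻¹ * ((φ y).toReal - (φ (P x)).toReal)) :
    ∀ x z : H, ‖P x - P z‖ ^ 2 ≤ (inner ℝ (x - z) (P x - P z) : ℝ) := by
  intro x z
  have h1 := hvi x (P z) (hfin z)
  have h2 := hvi z (P x) (hfin x)
  have hsum : (inner ℝ (x - P x) (P z - P x) : ℝ) + (inner ℝ (z - P z) (P x - P z) : ℝ) ≤ 0 := by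
    have he : μ⁻¹ * ((φ (P z)).toReal - (φ (P x)).toReal)
        + μ⁻¹ * ((φ (P x)).toReal - (φ (P z)).toReal) = 0 := by ring
    linarith
  simp only [inner_sub_left, inner_sub_right] at hsum
  rw [norm_sub_sq_real]
  simp only [inner_sub_left, inner_sub_right]
  linarith [real_inner_comm (P x) (P z), real_inner_self_eq_norm_sq (P x),
    real_inner_self_eq_norm_sq (P z)]

end aux19

set_option maxHeartbeats 1000000


/-- Let `H` be a real Hilbert space, `φ : H → (−∞, +∞]` proper lower
semicontinuous convex, `β > 0`, and `h = β q − (β q) □ φ` where `q = ‖·‖²/2` and `□` is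
infimal convolution.  Then `h : H → ℝ` is convex and Fréchet differentiable with a
`β`-Lipschitzian gradient; `∇h(x) = β • prox_{φ/β} x`; and for every `γ > 0`,
`prox_{γh} x = x − βγ • prox_{φ/(β(1+βγ))}(x/(1+βγ))`.  Extended-real values are modeled
in `EReal`, and proximal points are characterized as minimizers of the corresponding
Moreau problems. -/
theorem stmt_19 {H : Type*} [NormedAddCommGroup H] [InnerProductSpace ℝ H] [CompleteSpace H]
    (φ : H → EReal)
    (hproper : ∃ x, φ x ≠ ⊤) (hnebot : ∀ x, φ x ≠ ⊥)
    (hlsc : LowerSemicontinuous φ)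
    (hconv : ∀ x y : H, ∀ a b : ℝ, 0 ≤ a → 0 ≤ b → a + b = 1 →
      φ (a • x + b • y) ≤ (a : EReal) * φ x + (b : EReal) * φ y)
    (β : ℝ) (hβ : 0 < β)
    -- `h = β q − (β q) □ φ`, with `h` real valued :
    (h : H → ℝ)
    (hdef : ∀ x : H, ((h x : ℝ) : EReal) =
      ((β * (‖x‖ ^ 2 / 2) : ℝ) : EReal) -
        ⨅ y : H, (((β * (‖y‖ ^ 2 / 2) : ℝ)) : EReal) + φ (x - y))
    -- `P1 x = prox_{φ/β} x` :
    (P1 : H → H)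
    (hP1 : ∀ x y : H,
      ((β⁻¹ : ℝ) : EReal) * φ (P1 x) + ((‖x - P1 x‖ ^ 2 / 2 : ℝ) : EReal)
        ≤ ((β⁻¹ : ℝ) : EReal) * φ y + ((‖x - y‖ ^ 2 / 2 : ℝ) : EReal))
    (γ : ℝ) (hγ : 0 < γ)
    -- `P2 x = prox_{φ/(β(1+βγ))} x` :
    (P2 : H → H)
    (hP2 : ∀ x y : H,
      (((β * (1 + β * γ))⁻¹ : ℝ) : EReal) * φ (P2 x) + ((‖x - P2 x‖ ^ 2 / 2 : ℝ) : EReal)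
        ≤ (((β * (1 + β * γ))⁻¹ : ℝ) : EReal) * φ y + ((‖x - y‖ ^ 2 / 2 : ℝ) : EReal)) :
    ConvexOn ℝ Set.univ h ∧
    (∀ x : H, HasGradientAt h (β • P1 x) x) ∧
    LipschitzWith (Real.toNNReal β) (fun x => β • P1 x) ∧
    (∀ x p : H,
      -- `p = prox_{γh} x` :
      (∀ y : H, γ * h p + ‖x - p‖ ^ 2 / 2 ≤ γ * h y + ‖x - y‖ ^ 2 / 2) →
      p = x - (β * γ) • P2 ((1 / (1 + β * γ)) • x)) := by
  have hβγ : (0:ℝ) < 1 + β * γ := by nlinarith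
  have hμ2 : (0:ℝ) < β * (1 + β * γ) := by positivity
  have fin1 : ∀ x : H, φ (P1 x) ≠ ⊤ := aux19_fin φ hproper hnebot β hβ P1 hP1
  have fin2 : ∀ x : H, φ (P2 x) ≠ ⊤ := aux19_fin φ hproper hnebot _ hμ2 P2 hP2
  have vi1 := aux19_vi φ hnebot hconv β hβ P1 hP1 fin1
  have vi2 := aux19_vi φ hnebot hconv _ hμ2 P2 hP2 fin2
  have firm1 := aux19_firm φ β P1 fin1 vi1
  set f1 : H → ℝ := fun x => (φ (P1 x)).toReal with hf1def
  have hcoe1 : ∀ x : H, φ (P1 x) = ((f1 x : ℝ) : EReal) :=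
    fun x => (EReal.coe_toReal (fin1 x) (hnebot _)).symm
  -- reduce hP1 to a real inequality when φ y is real
  have hP1R : ∀ x y : H, ∀ r : ℝ, φ y = (r : EReal) →
      β⁻¹ * f1 x + ‖x - P1 x‖ ^ 2 / 2 ≤ β⁻¹ * r + ‖x - y‖ ^ 2 / 2 := by
    intro x y r hr
    have h0 := hP1 x y
    rw [hcoe1 x, hr, ← EReal.coe_mul, ← EReal.coe_mul, ← EReal.coe_add, ← EReal.coe_add] at h0
    exact_mod_cast h0
  -- value formula for h
  have hval : ∀ x : H, h x = β * (‖x‖ ^ 2 / 2) - (β * (‖x - P1 x‖ ^ 2 / 2) + f1 x) := by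
    intro x
    have hinf : (⨅ y : H, (((β * (‖y‖ ^ 2 / 2) : ℝ)) : EReal) + φ (x - y))
        = ((β * (‖x - P1 x‖ ^ 2 / 2) + f1 x : ℝ) : EReal) := by
      apply le_antisymm
      · have hle := iInf_le (fun y : H => (((β * (‖y‖ ^ 2 / 2) : ℝ)) : EReal) + φ (x - y))
          (x - P1 x)
        simp only [sub_sub_cancel] at hle
        rwa [hcoe1 x, ← EReal.coe_add] at hle
      · refine le_iInf fun y => ?_
        by_cases hy : φ (x - y) = ⊤
        · rw [hy]
          refine le_top.trans_eq ?_
          rw [EReal.coe_add_top]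
        · obtain ⟨r, hr⟩ : ∃ r : ℝ, φ (x - y) = (r : EReal) :=
            ⟨(φ (x - y)).toReal, (EReal.coe_toReal hy (hnebot _)).symm⟩
          have h0 := hP1R x (x - y) r hr
          rw [sub_sub_cancel] at h0
          rw [hr, ← EReal.coe_add, EReal.coe_le_coe_iff]
          have hs := mul_le_mul_of_nonneg_left h0 hβ.le
          rw [mul_add, mul_add, ← mul_assoc, ← mul_assoc, mul_inv_cancel₀ hβ.ne', one_mul,
            one_mul] at hs
          linarith
    have := hdef x
    rw [hinf, ← EReal.coe_sub] at this
    exact_mod_cast this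
  -- subgradient inequality
  have subgrad : ∀ x z : H, h x + β * (inner ℝ (z - x) (P1 x) : ℝ) ≤ h z := by
    intro x z
    have h0 := hP1R z (P1 x) (f1 x) (hcoe1 x)
    have hquad : ‖x‖ ^ 2 / 2 - ‖x - P1 x‖ ^ 2 / 2 + (inner ℝ (z - x) (P1 x) : ℝ)
        = ‖z‖ ^ 2 / 2 - ‖z - P1 x‖ ^ 2 / 2 := by
      have e1 := norm_sub_sq_real x (P1 x)
      have e2 := norm_sub_sq_real z (P1 x)
      have e3 : (inner ℝ (z - x) (P1 x) : ℝ) = inner ℝ z (P1 x) - inner ℝ x (P1 x) :=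
        inner_sub_left _ _ _
      linarith
    rw [hval x, hval z]
    have hquadβ : β * (‖x‖ ^ 2 / 2) - β * (‖x - P1 x‖ ^ 2 / 2) + β * (inner ℝ (z - x) (P1 x) : ℝ)
        = β * (‖z‖ ^ 2 / 2) - β * (‖z - P1 x‖ ^ 2 / 2) := by linear_combination β * hquad
    have hs := mul_le_mul_of_nonneg_left h0 hβ.le
    rw [mul_add, mul_add, ← mul_assoc, ← mul_assoc, mul_inv_cancel₀ hβ.ne', one_mul, one_mul] at hs
    linarith
  -- nonexpansiveness
  have hne : ∀ a b : H, ‖P1 a - P1 b‖ ≤ ‖a - b‖ := by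
    intro a b
    rcases eq_or_lt_of_le (norm_nonneg (P1 a - P1 b)) with hd | hd
    · rw [← hd]; exact norm_nonneg _
    · have hf := firm1 a b
      have hcs := real_inner_le_norm (a - b) (P1 a - P1 b)
      nlinarith
  -- quadratic upper bound
  have upper : ∀ x z : H, h z ≤ h x + β * (inner ℝ (z - x) (P1 x) : ℝ) + β * ‖z - x‖ ^ 2 := by
    intro x z
    have hsub := subgrad z x
    have hneg : (inner ℝ (x - z) (P1 z) : ℝ) = - inner ℝ (z - x) (P1 z) := by
      rw [show x - z = -(z - x) by abel, inner_neg_left]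
    have hsplit : (inner ℝ (z - x) (P1 z) : ℝ)
        = inner ℝ (z - x) (P1 x) + inner ℝ (z - x) (P1 z - P1 x) := by
      rw [← inner_add_right]; congr 1; abel
    have hcs := real_inner_le_norm (z - x) (P1 z - P1 x)
    have b2 : ‖z - x‖ * ‖P1 z - P1 x‖ ≤ ‖z - x‖ * ‖z - x‖ :=
      mul_le_mul_of_nonneg_left (hne z x) (norm_nonneg _)
    nlinarith [mul_le_mul_of_nonneg_left hcs hβ.le, mul_le_mul_of_nonneg_left b2 hβ.le]
  refine ⟨⟨convex_univ, ?_⟩, ?_, ?_, ?_⟩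
  · -- convexity
    intro x _ y _ a b ha hb hab
    simp only [smul_eq_mul]
    set p := a • x + b • y with hpdef
    have s1 := subgrad p x
    have s2 := subgrad p y
    have hv : a • (x - p) + b • (y - p) = 0 := by
      rw [smul_sub, smul_sub]
      have : a • x + b • y - (a + b) • p = 0 := by
        rw [hab, one_smul, ← hpdef, sub_self]
      rw [add_smul] at this
      rw [← this]; abel
    have hz : a * (inner ℝ (x - p) (P1 p) : ℝ) + b * (inner ℝ (y - p) (P1 p) : ℝ) = 0 := by
      have := congrArg (fun v => (inner ℝ v (P1 p) : ℝ)) hv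
      simpa [inner_add_left, real_inner_smul_left] using this
    have hz3 : a * (β * (inner ℝ (x - p) (P1 p) : ℝ)) + b * (β * (inner ℝ (y - p) (P1 p) : ℝ)) = 0 := by
      linear_combination β * hz
    have habp : a * h p + b * h p = h p := by linear_combination (h p) * hab
    have m1 := mul_le_mul_of_nonneg_left s1 ha
    have m2 := mul_le_mul_of_nonneg_left s2 hb
    linarith
  · -- gradient
    intro x
    rw [hasGradientAt_iff_hasFDerivAt, HasFDerivAt, hasFDerivAtFilter_iff_isLittleO,
      Asymptotics.isLittleO_iff]
    intro c hc
    rw [Filter.prod_pure, Filter.eventually_map, Metric.eventually_nhds_iff]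
    refine ⟨c / β, by positivity, fun z hz => ?_⟩
    dsimp only
    have e1 : ((InnerProductSpace.toDual ℝ H) (β • P1 x)) (z - x)
        = β * (inner ℝ (z - x) (P1 x) : ℝ) := by
      rw [InnerProductSpace.toDual_apply_apply, real_inner_smul_left, real_inner_comm]
    have l1 := subgrad x z
    have l2 := upper x z
    have hzn : ‖z - x‖ < c / β := by rwa [dist_eq_norm] at hz
    have k0 : β * (c / β) = c := by field_simp
    have k1 : β * ‖z - x‖ ≤ c := by nlinarith
    rw [e1, Real.norm_eq_abs, abs_le]
    have hnn : (0:ℝ) ≤ c * ‖z - x‖ := by positivity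
    refine ⟨by linarith, ?_⟩
    nlinarith [mul_nonneg (sub_nonneg.mpr k1) (norm_nonneg (z - x)), norm_nonneg (z - x)]
  · -- Lipschitz
    refine LipschitzWith.of_dist_le_mul fun a b => ?_
    rw [dist_eq_norm, dist_eq_norm, ← smul_sub, norm_smul, Real.norm_eq_abs, abs_of_pos hβ,
      Real.coe_toNNReal β hβ.le]
    exact mul_le_mul_of_nonneg_left (hne a b) hβ.le
  · -- prox of γ h
    intro x p hmin
    set w := P2 ((1 / (1 + β * γ)) • x) with hw
    set p₀ := x - (β * γ) • w with hp₀
    -- Step 1 : P1 p₀ = w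
    have hP1p₀ : P1 p₀ = w := by
      have h1 := vi1 p₀ w (fin2 _)
      have h2 := vi2 ((1 / (1 + β * γ)) • x) (P1 p₀) (fin1 _)
      rw [← hw] at h2
      have e : p₀ - w = (1 + β * γ) • ((1 / (1 + β * γ)) • x - w) := by
        rw [smul_sub, smul_smul, mul_one_div, div_self hβγ.ne', one_smul, hp₀]
        rw [show (1 + β * γ) • w = w + (β * γ) • w by rw [add_smul, one_smul]]
        abel
      have h2' : (inner ℝ (p₀ - w) (P1 p₀ - w) : ℝ)
          ≤ β⁻¹ * ((φ (P1 p₀)).toReal - (φ w).toReal) := by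
        rw [e, real_inner_smul_left]
        have hm := mul_le_mul_of_nonneg_left h2 hβγ.le
        have e2 : (1 + β * γ) * ((β * (1 + β * γ))⁻¹ * ((φ (P1 p₀)).toReal - (φ w).toReal))
            = β⁻¹ * ((φ (P1 p₀)).toReal - (φ w).toReal) := by
          field_simp
        linarith
      have hsum : (inner ℝ (p₀ - P1 p₀) (w - P1 p₀) : ℝ)
          + (inner ℝ (p₀ - w) (P1 p₀ - w) : ℝ) ≤ 0 := by
        have he : β⁻¹ * ((φ w).toReal - (φ (P1 p₀)).toReal)
            + β⁻¹ * ((φ (P1 p₀)).toReal - (φ w).toReal) = 0 := by ring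
        linarith
      have hn2 : ‖w - P1 p₀‖ ^ 2 ≤ 0 := by
        rw [norm_sub_sq_real]
        simp only [inner_sub_left, inner_sub_right] at hsum ⊢
        linarith [real_inner_comm w (P1 p₀), real_inner_self_eq_norm_sq w,
          real_inner_self_eq_norm_sq (P1 p₀)]
      have : w - P1 p₀ = 0 := by
        rw [← norm_eq_zero, ← pow_eq_zero_iff (two_ne_zero)]
        exact le_antisymm hn2 (by positivity)
      rw [sub_eq_zero] at this
      exact this.symm
    -- Step 2 : x - p = (γβ) • P1 p
    have hkey : ∀ v : H, (inner ℝ (x - p - (γ * β) • P1 p) v : ℝ) ≤ 0 := by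
      intro v
      have hC : (0:ℝ) ≤ γ * β * ‖v‖ ^ 2 + ‖v‖ ^ 2 / 2 := by positivity
      have key : ∀ t : ℝ, 0 < t → t ≤ 1 →
          (inner ℝ (x - p - (γ * β) • P1 p) v : ℝ) ≤ 0 + t * (γ * β * ‖v‖ ^ 2 + ‖v‖ ^ 2 / 2) := by
        intro t ht ht1
        have hm := hmin (p + t • v)
        have hu := upper p (p + t • v)
        have e1 : p + t • v - p = t • v := by abel
        rw [e1] at hu
        have e3 : ‖t • v‖ ^ 2 = t ^ 2 * ‖v‖ ^ 2 := by
          rw [norm_smul, Real.norm_eq_abs, mul_pow, sq_abs]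
        have e4 : (inner ℝ (t • v) (P1 p) : ℝ) = t * inner ℝ v (P1 p) := real_inner_smul_left _ _ _
        rw [e3, e4] at hu
        have e5 : ‖x - (p + t • v)‖ ^ 2
            = ‖x - p‖ ^ 2 - 2 * t * (inner ℝ (x - p) v : ℝ) + t ^ 2 * ‖v‖ ^ 2 := by
          rw [show x - (p + t • v) = (x - p) - t • v by abel, norm_sub_sq_real,
            real_inner_smul_right, norm_smul, Real.norm_eq_abs, mul_pow, sq_abs]
          ring
        rw [e5] at hm
        have hγu := mul_le_mul_of_nonneg_left hu hγ.le
        have ea : (inner ℝ (x - p - (γ * β) • P1 p) v : ℝ)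
            = inner ℝ (x - p) v - (γ * β) * inner ℝ (P1 p) v := by
          rw [inner_sub_left, real_inner_smul_left]
        have ecomm : (inner ℝ v (P1 p) : ℝ) = inner ℝ (P1 p) v := real_inner_comm _ _
        rw [ecomm] at hγu
        have h2 : t * (inner ℝ (x - p - (γ * β) • P1 p) v : ℝ)
            ≤ t * (0 + t * (γ * β * ‖v‖ ^ 2 + ‖v‖ ^ 2 / 2)) := by
          rw [ea]
          nlinarith [hm, hγu]
        exact (mul_le_mul_iff_right₀ ht).mp h2
      simpa using aux19_limit hC key
    have hpe : x - p = (γ * β) • P1 p := by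
      have := hkey (x - p - (γ * β) • P1 p)
      rw [real_inner_self_eq_norm_sq] at this
      have h0 : x - p - (γ * β) • P1 p = 0 := by
        rw [← norm_eq_zero, ← pow_eq_zero_iff (two_ne_zero)]
        exact le_antisymm this (by positivity)
      rwa [sub_eq_zero] at h0
    have hq' : x - p₀ = (γ * β) • P1 p₀ := by
      rw [hP1p₀, hp₀, sub_sub_cancel, mul_comm]
    -- Step 3 : uniqueness
    have hd : p - p₀ = (γ * β) • (P1 p₀ - P1 p) := by
      rw [smul_sub, ← hq', ← hpe]; abel
    have hf := firm1 p p₀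
    rw [hd, real_inner_smul_left,
      show P1 p₀ - P1 p = -(P1 p - P1 p₀) by abel, inner_neg_left,
      real_inner_self_eq_norm_sq] at hf
    have hdz : P1 p - P1 p₀ = 0 := by
      rw [← norm_eq_zero, ← pow_eq_zero_iff (two_ne_zero)]
      nlinarith [sq_nonneg ‖P1 p - P1 p₀‖]
    have : p - p₀ = 0 := by rw [hd, show P1 p₀ - P1 p = -(P1 p - P1 p₀) by abel, hdz, neg_zero,
      smul_zero]
    rw [sub_eq_zero] at this
    rw [this, hp₀]
end
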